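/- arXiv:1606.04230 — 7 statements merged into one kernel-verified Lean document; each statement's English description precedes it below -/
import Mathlib

section
/- Let a, b ≥ 0 be real numbers. There exists a differentiable function x : [0,1] → ℝ satisfying the Riccati equation x'(t) + a² x(t)² = −b² for all t ∈ [0,1] if and only if a·b < π. -/
open Set

/-- for `a, b ≥ 0`, there is a differentiable function `x` on `[0,1]` solving the
Riccati equation `x' + a² x² = -b²` on `[0,1]` if and only if `a·b < π`. -/
theorem stmt_2 (a b : ℝ) (ha : 0 ≤ a) (hb : 0 ≤ b) :
    (∃ x : ℝ → ℝ, ∀ t ∈ Icc (0:ℝ) 1,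
      HasDerivWithinAt x (-(b ^ 2) - a ^ 2 * (x t) ^ 2) (Icc (0:ℝ) 1) t) ↔ a * b < Real.pi := by
  constructor
  · rintro ⟨x, hx⟩
    rcases eq_or_lt_of_le ha with rfl | ha'
    · simpa using Real.pi_pos
    rcases eq_or_lt_of_le hb with rfl | hb'
    · simpa using Real.pi_pos
    -- θ(t) = arctan (a * x t / b) has derivative -(a*b)
    set g : ℝ → ℝ := fun t => Real.arctan (a * x t / b) + a * b * t with hg
    have hgd : ∀ t ∈ Icc (0:ℝ) 1, HasDerivWithinAt g 0 (Icc (0:ℝ) 1) t := by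
      intro t ht
      have h1 : HasDerivWithinAt (fun t => a * x t / b)
          (a * (-(b ^ 2) - a ^ 2 * (x t) ^ 2) / b) (Icc (0:ℝ) 1) t :=
        ((hx t ht).const_mul a).div_const b
      have h2 := (Real.hasDerivAt_arctan (a * x t / b)).comp_hasDerivWithinAt t h1
      have h3 := h2.add ((hasDerivWithinAt_id t (Icc (0:ℝ) 1)).const_mul (a * b))
      refine h3.congr_deriv ?_
      have hb0 : b ≠ 0 := ne_of_gt hb'
      have hpos : (0:ℝ) < 1 + (a * x t / b) ^ 2 := by positivity
      field_simp
      ring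
    have key : ‖g 1 - g 0‖ ≤ 0 * ‖(1:ℝ) - 0‖ :=
      (convex_Icc (0:ℝ) 1).norm_image_sub_le_of_norm_hasDerivWithin_le hgd
        (fun t _ => by simp) (by norm_num) (by norm_num)
    have hg10 : g 1 = g 0 := by
      rw [zero_mul] at key
      exact sub_eq_zero.1 (norm_le_zero_iff.1 key)
    have h0 : Real.arctan (a * x 0 / b) < Real.pi / 2 := Real.arctan_lt_pi_div_two _
    have h1 : -(Real.pi / 2) < Real.arctan (a * x 1 / b) := Real.neg_pi_div_two_lt_arctan _
    simp only [hg, mul_one, mul_zero, add_zero] at hg10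
    linarith
  · intro hab
    rcases eq_or_lt_of_le hb with rfl | hb'
    · refine ⟨fun _ => 0, fun t ht => ?_⟩
      simpa using hasDerivWithinAt_const t _ (0:ℝ)
    rcases eq_or_lt_of_le ha with rfl | ha'
    · refine ⟨fun t => -(b ^ 2) * t, fun t ht => ?_⟩
      simpa using (hasDerivWithinAt_id t (Icc (0:ℝ) 1)).const_mul (-(b^2))
    -- x(t) = (b/a) * tan (a*b/2 - a*b*t)
    refine ⟨fun t => b / a * Real.tan (a * b / 2 - a * b * t), fun t ht => ?_⟩
    have hmem : a * b / 2 - a * b * t ∈ Ioo (-(Real.pi/2)) (Real.pi/2) := by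
      obtain ⟨ht0, ht1⟩ := ht
      constructor
      · nlinarith [mul_pos ha' hb']
      · nlinarith [mul_pos ha' hb']
    have hcos : Real.cos (a * b / 2 - a * b * t) ≠ 0 :=
      (Real.cos_pos_of_mem_Ioo hmem).ne'
    have hinner : HasDerivWithinAt (fun t => a * b / 2 - a * b * t) (-(a * b))
        (Icc (0:ℝ) 1) t := by
      exact ((hasDerivWithinAt_const t (Icc (0:ℝ) 1) (a*b/2)).sub
        ((hasDerivWithinAt_id t (Icc (0:ℝ) 1)).const_mul (a*b))).congr_deriv (by ring)
    have htan := ((Real.hasDerivAt_tan hcos).comp_hasDerivWithinAt t hinner).const_mul (b / a)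
    refine htan.congr_deriv ?_
    have h1 : (1 + Real.tan (a * b / 2 - a * b * t) ^ 2)⁻¹
        = Real.cos (a * b / 2 - a * b * t) ^ 2 := Real.inv_one_add_tan_sq hcos
    have ha0 : a ≠ 0 := ne_of_gt ha'
    have hpos : (0:ℝ) < 1 + Real.tan (a * b / 2 - a * b * t) ^ 2 := by positivity
    rw [← h1]
    field_simp
    ring
end

section
/- Let T > 0, let m, M : [0,T] → ℝ be integrable functions with m(t) ≤ M(t) for almost every t, and let η₁, η₂ : [0,T] → ℝ be continuous functions with 0 < η₁(t) ≤ η₂(t) for all t ∈ [0,T]. Suppose g, f : [0,T] → ℝ are absolutely continuous and satisfy g'(t) + g(t)²/η₁(t) = m(t) and f'(t) + f(t)²/η₂(t) = M(t) for almost every t ∈ [0,T], with g(0) ≤ f(0). Then f(t) ≥ g(t) for every t ∈ [0,T]; moreover f(t) ≤ f(0) + ∫₀ᵗ M(s) ds for every t ∈ [0,T]. -/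
open Set MeasureTheory intervalIntegral

/-- Sturm comparison lemma for the Riccati equations `g' + g²/η₁ = m` and
`f' + f²/η₂ = M` with `m ≤ M` a.e., `0 < η₁ ≤ η₂`, for absolutely continuous solutions
(encoded as being the integral of their a.e. derivative) with `g 0 ≤ f 0`: then `g ≤ f` on
`[0,T]` and `f t ≤ f 0 + ∫₀ᵗ M`. -/
theorem stmt_3 (T : ℝ) (hT : 0 < T) (m M η₁ η₂ g f g' f' : ℝ → ℝ)
    (hm : IntegrableOn m (Icc 0 T)) (hM : IntegrableOn M (Icc 0 T))
    (hmM : ∀ᵐ t ∂(volume.restrict (Icc 0 T)), m t ≤ M t)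
    (hη₁ : ContinuousOn η₁ (Icc 0 T)) (hη₂ : ContinuousOn η₂ (Icc 0 T))
    (hη₁pos : ∀ t ∈ Icc 0 T, 0 < η₁ t) (hηle : ∀ t ∈ Icc 0 T, η₁ t ≤ η₂ t)
    (hg' : IntegrableOn g' (Icc 0 T)) (hf' : IntegrableOn f' (Icc 0 T))
    (hgAC : ∀ t ∈ Icc 0 T, g t = g 0 + ∫ s in (0:ℝ)..t, g' s)
    (hfAC : ∀ t ∈ Icc 0 T, f t = f 0 + ∫ s in (0:ℝ)..t, f' s)
    (hgeq : ∀ᵐ t ∂(volume.restrict (Icc 0 T)), g' t + (g t) ^ 2 / η₁ t = m t)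
    (hfeq : ∀ᵐ t ∂(volume.restrict (Icc 0 T)), f' t + (f t) ^ 2 / η₂ t = M t)
    (h0 : g 0 ≤ f 0) :
    ∀ t ∈ Icc 0 T, g t ≤ f t ∧ f t ≤ f 0 + ∫ s in (0:ℝ)..t, M s := by
  have hT0 : (0 : ℝ) ≤ T := hT.le
  have huIcc : uIcc (0 : ℝ) T = Icc 0 T := uIcc_of_le hT0
  -- interval integrability on subintervals
  have hii : ∀ {φ : ℝ → ℝ}, IntegrableOn φ (Icc 0 T) → ∀ {a b : ℝ}, a ∈ Icc 0 T → b ∈ Icc 0 T →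
      a ≤ b → IntervalIntegrable φ volume a b := by
    intro φ hφ a b ha hb hab
    exact ((hφ.mono_set (Icc_subset_Icc ha.1 hb.2)).mono_set
      (by rw [uIcc_of_le hab])).intervalIntegrable
  -- continuity of f and g on [0,T]
  have hgc : ContinuousOn g (Icc 0 T) := by
    have hp : ContinuousOn (fun t => ∫ s in (0:ℝ)..t, g' s) (Icc 0 T) := by
      have := continuousOn_primitive_interval (a := (0:ℝ)) (b := T) (f := g') (by rwa [huIcc])
      rwa [huIcc] at this
    exact (continuousOn_const.add hp).congr hgAC
  have hfc : ContinuousOn f (Icc 0 T) := by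
    have hp : ContinuousOn (fun t => ∫ s in (0:ℝ)..t, f' s) (Icc 0 T) := by
      have := continuousOn_primitive_interval (a := (0:ℝ)) (b := T) (f := f') (by rwa [huIcc])
      rwa [huIcc] at this
    exact (continuousOn_const.add hp).congr hfAC
  have hη₂pos : ∀ t ∈ Icc 0 T, 0 < η₂ t := fun t ht => (hη₁pos t ht).trans_le (hηle t ht)
  -- the a.e. differential inequality for h = f - g
  have key : ∀ᵐ s ∂(volume.restrict (Icc 0 T)),
      f' s - g' s ≥ -((f s + g s) / η₁ s) * (f s - g s) := by
    filter_upwards [hgeq, hfeq, hmM, ae_restrict_mem measurableSet_Icc] with s h1 h2 h3 hs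
    have hη1 : 0 < η₁ s := hη₁pos s hs
    have hη2 : 0 < η₂ s := hη₂pos s hs
    have hdiv : f s ^ 2 / η₂ s ≤ f s ^ 2 / η₁ s := by
      gcongr
      exact hηle s hs
    have e : -((f s + g s) / η₁ s) * (f s - g s) = g s ^ 2 / η₁ s - f s ^ 2 / η₁ s := by
      field_simp
      ring
    rw [e]
    have e1 : g' s = m s - g s ^ 2 / η₁ s := by linarith
    have e2 : f' s = M s - f s ^ 2 / η₂ s := by linarith
    rw [e1, e2]
    linarith
  -- second part: f' ≤ M a.e.
  have hf'leM : ∀ᵐ s ∂(volume.restrict (Icc 0 T)), f' s ≤ M s := by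
    filter_upwards [hfeq, ae_restrict_mem measurableSet_Icc] with s h2 hs
    have := div_nonneg (sq_nonneg (f s)) (hη₂pos s hs).le
    linarith
  have part2 : ∀ t ∈ Icc 0 T, f t ≤ f 0 + ∫ s in (0:ℝ)..t, M s := by
    intro t ht
    rw [hfAC t ht]
    have h1 : (∫ s in (0:ℝ)..t, f' s) ≤ ∫ s in (0:ℝ)..t, M s := by
      refine integral_mono_ae_restrict ht.1 (hii hf' (left_mem_Icc.2 hT0) ht ht.1)
        (hii hM (left_mem_Icc.2 hT0) ht ht.1) ?_
      exact ae_restrict_of_ae_restrict_of_subset (Icc_subset_Icc le_rfl ht.2) hf'leM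
    linarith
  -- FTC-type identity for h = f - g on subintervals
  have hsub : ∀ a ∈ Icc 0 T, ∀ b ∈ Icc 0 T, a ≤ b →
      (f b - g b) - (f a - g a) = ∫ s in a..b, (f' s - g' s) := by
    intro a ha b hb hab
    have i0a : IntervalIntegrable f' volume 0 a := hii hf' (left_mem_Icc.2 hT0) ha ha.1
    have i0b : IntervalIntegrable f' volume 0 b := hii hf' (left_mem_Icc.2 hT0) hb hb.1
    have j0a : IntervalIntegrable g' volume 0 a := hii hg' (left_mem_Icc.2 hT0) ha ha.1
    have j0b : IntervalIntegrable g' volume 0 b := hii hg' (left_mem_Icc.2 hT0) hb hb.1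
    have iab : IntervalIntegrable f' volume a b := hii hf' ha hb hab
    have jab : IntervalIntegrable g' volume a b := hii hg' ha hb hab
    rw [hfAC a ha, hfAC b hb, hgAC a ha, hgAC b hb,
      integral_sub iab jab, ← integral_interval_sub_left i0b i0a,
      ← integral_interval_sub_left j0b j0a]
    ring
  -- first part: g ≤ f on [0,T]
  have part1 : ∀ t ∈ Icc 0 T, g t ≤ f t := by
    by_contra hcon
    push_neg at hcon
    obtain ⟨t₁, ht₁, hlt⟩ := hcon
    -- bound on c = (f+g)/η₁
    have hcc : ContinuousOn (fun s => (f s + g s) / η₁ s) (Icc 0 T) :=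
      (hfc.add hgc).div hη₁ (fun s hs => (hη₁pos s hs).ne')
    obtain ⟨K, hK⟩ := isCompact_Icc.exists_bound_of_continuousOn hcc
    have hK0 : 0 ≤ K := le_trans (norm_nonneg _) (hK 0 (left_mem_Icc.2 hT0))
    -- the set where g ≤ f, up to t₁
    set S : Set ℝ := Icc 0 t₁ ∩ (fun s => f s - g s) ⁻¹' (Ici 0) with hS
    have hScl : IsClosed S :=
      ((hfc.sub hgc).mono (Icc_subset_Icc le_rfl ht₁.2)).preimage_isClosed_of_isClosed
        isClosed_Icc isClosed_Ici
    have hSne : S.Nonempty := ⟨0, ⟨left_mem_Icc.2 ht₁.1, by simpa using h0⟩⟩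
    have hSbdd : BddAbove S := (isCompact_Icc (a := (0:ℝ)) (b := t₁)).bddAbove.mono inter_subset_left
    set t₀ := sSup S with ht₀def
    have ht₀S : t₀ ∈ S := hScl.csSup_mem hSne hSbdd
    have ht₀I : t₀ ∈ Icc 0 t₁ := ht₀S.1
    have ht₀T : t₀ ∈ Icc 0 T := ⟨ht₀I.1, ht₀I.2.trans ht₁.2⟩
    have ht₀h : 0 ≤ f t₀ - g t₀ := ht₀S.2
    have ht₀lt : t₀ < t₁ := lt_of_le_of_ne ht₀I.2 (by intro h; rw [h] at ht₀h; linarith)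
    -- every point strictly between t₀ and t₁ has h < 0
    have hneg : ∀ s, t₀ < s → s ≤ t₁ → f s - g s < 0 := by
      intro s hs1 hs2
      by_contra hge
      push_neg at hge
      have : s ∈ S := ⟨⟨ht₀I.1.trans hs1.le, hs2⟩, hge⟩
      exact absurd (le_csSup hSbdd this) (not_le.2 hs1)
    -- localize
    set t₂ := min t₁ (t₀ + 1 / (2 * (K + 1))) with ht₂def
    have hKpos : (0:ℝ) < 2 * (K + 1) := by linarith
    have hKi : (0:ℝ) < 1 / (2 * (K + 1)) := by positivity
    have ht₂gt : t₀ < t₂ := lt_min ht₀lt (by linarith)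
    have ht₂le : t₂ ≤ t₁ := min_le_left _ _
    have ht₂T : t₂ ∈ Icc 0 T := ⟨ht₀I.1.trans ht₂gt.le, ht₂le.trans ht₁.2⟩
    have hsmall : K * (t₂ - t₀) ≤ 1 / 2 := by
      have h1 : t₂ - t₀ ≤ 1 / (2 * (K + 1)) := by
        have := min_le_right t₁ (t₀ + 1 / (2 * (K + 1)))
        linarith
      have h2 : K * (t₂ - t₀) ≤ K * (1 / (2 * (K + 1))) := by
        apply mul_le_mul_of_nonneg_left h1 hK0
      have h3 : K * (1 / (2 * (K + 1))) ≤ 1 / 2 := by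
        rw [mul_one_div, div_le_div_iff₀ hKpos (by norm_num : (0:ℝ) < 2)]
        linarith
      linarith
    -- maximum of w = g - f on [t₀, t₂]
    have hIsub : Icc t₀ t₂ ⊆ Icc 0 T := Icc_subset_Icc ht₀T.1 ht₂T.2
    have hwc : ContinuousOn (fun s => g s - f s) (Icc t₀ t₂) :=
      (hgc.sub hfc).mono hIsub
    obtain ⟨x, hxmem, hxmax⟩ := isCompact_Icc.exists_isMaxOn (nonempty_Icc.2 ht₂gt.le) hwc
    set A := g x - f x with hA
    have hApos : 0 < A := by
      have h1 : g t₂ - f t₂ ≤ A := hxmax (right_mem_Icc.2 ht₂gt.le)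
      have h2 := hneg t₂ ht₂gt ht₂le
      linarith
    have hxgt : t₀ < x := by
      rcases lt_or_eq_of_le hxmem.1 with h | h
      · exact h
      · exfalso; rw [← h] at hA; rw [hA] at hApos; linarith
    have hxT : x ∈ Icc 0 T := hIsub hxmem
    -- integral estimate on [t₀, x]
    have hax : t₀ ≤ x := hxmem.1
    have heq := hsub t₀ ht₀T x hxT hax
    have hint1 : IntervalIntegrable (fun s => f' s - g' s) volume t₀ x :=
      (hii hf' ht₀T hxT hax).sub (hii hg' ht₀T hxT hax)
    have hint2 : IntervalIntegrable (fun _ : ℝ => K * (-A)) volume t₀ x :=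
      intervalIntegrable_const
    -- a.e. on [t₀, x]: f' - g' ≥ K * (-A)
    have haex : ∀ᵐ s ∂(volume.restrict (Icc t₀ x)), (fun _ => K * (-A)) s ≤ f' s - g' s := by
      have hrest : ∀ᵐ s ∂(volume.restrict (Icc t₀ x)),
          f' s - g' s ≥ -((f s + g s) / η₁ s) * (f s - g s) :=
        ae_restrict_of_ae_restrict_of_subset (Icc_subset_Icc ht₀T.1 hxT.2) key
      have hne0 : ∀ᵐ s ∂(volume.restrict (Icc t₀ x)), s ≠ t₀ := by
        rw [ae_iff]
        have : {s : ℝ | ¬ s ≠ t₀} = {t₀} := by ext s; simp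
        rw [this]
        exact le_antisymm ((Measure.restrict_le_self _).trans_eq (measure_singleton t₀))
          zero_le
      filter_upwards [hrest, hne0, ae_restrict_mem measurableSet_Icc] with s h1 h2 hs
      have hs1 : t₀ < s := lt_of_le_of_ne hs.1 (Ne.symm h2)
      have hs2 : s ≤ t₂ := le_trans hs.2 hxmem.2
      have hsneg : f s - g s < 0 := hneg s hs1 (hs2.trans ht₂le)
      have hsT : s ∈ Icc 0 T := hIsub ⟨hs.1, hs2⟩
      have hcb : |(f s + g s) / η₁ s| ≤ K := by
        have := hK s hsT; rwa [Real.norm_eq_abs] at this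
      have hwA : g s - f s ≤ A := hxmax ⟨hs.1, hs2⟩
      -- -(c s)*(f s - g s) ≥ -K*(g s - f s) ≥ -K*A = K*(-A)
      have h3 : -((f s + g s) / η₁ s) * (f s - g s) ≥ -(K * (g s - f s)) := by
        have habs : |((f s + g s) / η₁ s) * (f s - g s)| ≤ K * (g s - f s) := by
          rw [abs_mul]
          calc |(f s + g s) / η₁ s| * |f s - g s| ≤ K * |f s - g s| := by
                apply mul_le_mul_of_nonneg_right hcb (abs_nonneg _)
            _ = K * (g s - f s) := by rw [abs_of_neg hsneg]; ring
        have h5 : (f s + g s) / η₁ s * (f s - g s) ≤ K * (g s - f s) :=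
          le_trans (le_abs_self _) habs
        linarith
      have h4 : -(K * (g s - f s)) ≥ K * (-A) := by
        have := mul_le_mul_of_nonneg_left hwA hK0
        linarith
      show K * (-A) ≤ f' s - g' s
      linarith
    have hInt : (∫ s in t₀..x, (K * (-A) : ℝ)) ≤ ∫ s in t₀..x, (f' s - g' s) :=
      integral_mono_ae_restrict hax hint2 hint1 haex
    rw [intervalIntegral.integral_const, smul_eq_mul] at hInt
    -- combine
    have hxA : f x - g x = -A := by rw [hA]; ring
    have hbound : (x - t₀) * (K * (-A)) ≥ -(A / 2) := by
      have h1 : K * (x - t₀) ≤ 1 / 2 := by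
        have : x - t₀ ≤ t₂ - t₀ := by linarith [hxmem.2]
        nlinarith
      have h2 := mul_le_mul_of_nonneg_left h1 hApos.le
      linarith
    rw [← heq] at hInt
    rw [hxA] at hInt
    simp only [hA] at hInt hbound
    linarith
  exact fun t ht => ⟨part1 t ht, part2 t ht⟩
end

section
/- Let η : [0,1] → ℝ be continuous with η(t) > 0 for all t, and let m : [0,1] → ℝ be a bounded measurable function; write [m(t)]₋ = max(−m(t), 0) for the negative part of m. (i) If sup_{t∈[0,1]} [m(t)]₋ / inf_{t∈[0,1]} η(t) < π², then there exists an absolutely continuous function g : [0,1] → ℝ satisfying g'(t) + g(t)²/η(t) = m(t) for almost every t ∈ [0,1]. (ii) If there is a constant c ≥ 0 with m(t) ≤ −c for almost every t and c / sup_{t∈[0,1]} η(t) ≥ π², then no absolutely continuous function g : [0,1] → ℝ satisfies g'(t) + g(t)²/η(t) = m(t) almost everywhere on [0,1]. -/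
open Set MeasureTheory intervalIntegral

set_option maxHeartbeats 1000000


lemma gronwall_zero {a b K : ℝ} {ψ : ℝ → ℝ} (hab : a ≤ b) (hK : 0 ≤ K)
    (hc : ContinuousOn ψ (Icc a b)) (hpos : ∀ t ∈ Icc a b, 0 ≤ ψ t)
    (hineq : ∀ t ∈ Icc a b, ψ t ≤ K * ∫ u in a..t, ψ u) :
    ∀ t ∈ Icc a b, ψ t ≤ 0 := by
  have hint : IntegrableOn ψ (Icc a b) := hc.integrableOn_Icc
  set W : ℝ → ℝ := fun t => ∫ u in a..t, ψ u with hW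
  have hWc : ContinuousOn W (Icc a b) := by
    have := intervalIntegral.continuousOn_primitive_interval (a := a) (b := b)
      (f := ψ) (μ := volume) (by rwa [uIcc_of_le hab])
    rwa [uIcc_of_le hab] at this
  have hWd : ∀ x ∈ Ioo a b, HasDerivAt W (ψ x) x := by
    intro x hx
    apply intervalIntegral.integral_hasDerivAt_right
    · have h1 : IntegrableOn ψ (uIcc a x) := by
        rw [uIcc_of_le hx.1.le]
        exact hint.mono_set (Icc_subset_Icc le_rfl hx.2.le)
      exact h1.intervalIntegrable
    · exact (hc.mono (Ioo_subset_Icc_self)).stronglyMeasurableAtFilter isOpen_Ioo x hx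
    · exact (hc.mono Ioo_subset_Icc_self).continuousAt (isOpen_Ioo.mem_nhds hx)
  set E : ℝ → ℝ := fun t => W t * Real.exp (-K * t) with hE
  have hEd : ∀ x ∈ Ioo a b, HasDerivAt E ((ψ x - K * W x) * Real.exp (-K * x)) x := by
    intro x hx
    have h1 : HasDerivAt (fun t => Real.exp (-K * t)) (-K * Real.exp (-K * x)) x := by
      have := ((hasDerivAt_id x).const_mul (-K)).exp
      simp only [id] at this
      convert this using 1
      ring
    have := (hWd x hx).mul h1
    exact this.congr_deriv (by ring)
  have hanti : AntitoneOn E (Icc a b) := by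
    apply antitoneOn_of_deriv_nonpos (convex_Icc a b)
    · exact (hWc.mul (Real.continuous_exp.comp (continuous_const.mul continuous_id)).continuousOn)
    · intro x hx
      rw [interior_Icc] at hx
      exact ((hEd x hx).differentiableAt).differentiableWithinAt
    · intro x hx
      rw [interior_Icc] at hx
      rw [(hEd x hx).deriv]
      have hx' : x ∈ Icc a b := Ioo_subset_Icc_self hx
      have := hineq x hx'
      nlinarith [Real.exp_pos (-K * x)]
  intro t ht
  have hEa : E a = 0 := by simp [hE, hW]
  have : E t ≤ 0 := by
    rw [← hEa]
    exact hanti (left_mem_Icc.2 hab) ht ht.1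
  have hWt : W t ≤ 0 := by
    by_contra hcon
    push_neg at hcon
    have := mul_pos hcon (Real.exp_pos (-K * t))
    have hEt : E t = W t * Real.exp (-K * t) := rfl
    linarith [hEt ▸ this]
  calc ψ t ≤ K * W t := hineq t ht
    _ ≤ 0 := mul_nonpos_of_nonneg_of_nonpos hK hWt

lemma cross_aux {b K : ℝ} {φ : ℝ → ℝ} (hb : 0 ≤ b) (hK : 0 ≤ K)
    (hφc : ContinuousOn φ (Icc 0 b)) (hφ0 : φ 0 = 0)
    (key : ∀ τ t, 0 ≤ τ → τ ≤ t → t ≤ b → φ τ = 0 → (∀ u ∈ Icc τ t, φ u ≤ 0) →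
      -φ t ≤ K * ∫ u in τ..t, -φ u) :
    ∀ t ∈ Icc 0 b, 0 ≤ φ t := by
  by_contra hcon
  push_neg at hcon
  obtain ⟨t₀, ht₀, ht₀neg⟩ := hcon
  set Z : Set ℝ := {t | t ∈ Icc 0 t₀ ∧ φ t = 0} with hZ
  have hsub : Icc 0 t₀ ⊆ Icc 0 b := Icc_subset_Icc le_rfl ht₀.2
  have hZclosed : IsClosed Z :=
    (hφc.mono hsub).preimage_isClosed_of_isClosed isClosed_Icc isClosed_singleton
  have hZne : Z.Nonempty := ⟨0, ⟨left_mem_Icc.2 ht₀.1, hφ0⟩⟩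
  have hZbdd : BddAbove Z := ⟨t₀, fun z hz => hz.1.2⟩
  set τ := sSup Z with hτ
  have hτZ : τ ∈ Z := hZclosed.csSup_mem hZne hZbdd
  have hτ0 : 0 ≤ τ := hτZ.1.1
  have hτt₀ : τ ≤ t₀ := hτZ.1.2
  have hφτ : φ τ = 0 := hτZ.2
  have hneg : ∀ u ∈ Icc τ t₀, φ u ≤ 0 := by
    intro u hu
    rcases eq_or_lt_of_le hu.1 with rfl | hlt
    · exact le_of_eq hφτ
    by_contra hpos
    push_neg at hpos
    have hut₀ : u < t₀ := lt_of_le_of_ne hu.2 (by rintro rfl; linarith)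
    have hIVT : (0:ℝ) ∈ φ '' Icc u t₀ := by
      apply intermediate_value_Icc' hut₀.le
        (hφc.mono (Icc_subset_Icc (hτ0.trans hlt.le) ht₀.2))
      exact ⟨ht₀neg.le, hpos.le⟩
    obtain ⟨z, hzmem, hz0⟩ := hIVT
    have hzZ : z ∈ Z := ⟨⟨hτ0.trans (hlt.le.trans hzmem.1), hzmem.2⟩, hz0⟩
    have : z ≤ τ := le_csSup hZbdd hzZ
    linarith [hzmem.1]
  have hG : ∀ t ∈ Icc τ t₀, (fun u => -φ u) t ≤ 0 := by
    apply gronwall_zero hτt₀ hK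
    · exact (hφc.mono (Icc_subset_Icc hτ0 ht₀.2)).neg
    · intro t ht
      simpa using hneg t ht
    · intro t ht
      exact key τ t hτ0 ht.1 (ht.2.trans ht₀.2) hφτ
        (fun u hu => hneg u ⟨hu.1, hu.2.trans ht.2⟩)
  have := hG t₀ (right_mem_Icc.2 hτt₀)
  simp only at this
  linarith

/-- An absolutely continuous solution `g` of the Riccati equation `g' + g²/η = m` a.e. on
`[0,1]`, encoded as: `g` is the integral of an integrable a.e. derivative `g'` and the equation
holds almost everywhere on `[0,1]`. -/
def HasACRiccatiSol (η m : ℝ → ℝ) : Prop :=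
  ∃ g g' : ℝ → ℝ, IntegrableOn g' (Icc (0:ℝ) 1) ∧
    (∀ t ∈ Icc (0:ℝ) 1, g t = g 0 + ∫ s in (0:ℝ)..t, g' s) ∧
    (∀ᵐ t ∂(volume.restrict (Icc (0:ℝ) 1)), g' t + (g t) ^ 2 / η t = m t)

lemma stmt4_part1 (η m : ℝ → ℝ)
    (hη : ContinuousOn η (Icc (0:ℝ) 1)) (hηpos : ∀ t ∈ Icc (0:ℝ) 1, 0 < η t)
    (hm_meas : Measurable m) (hm_bdd : ∃ C, ∀ t ∈ Icc (0:ℝ) 1, |m t| ≤ C)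
    (hsup : sSup ((fun t => max (-(m t)) 0) '' Icc (0:ℝ) 1) / sInf (η '' Icc (0:ℝ) 1)
      < Real.pi ^ 2) :
    HasACRiccatiSol η m := by
  obtain ⟨C₀, hC₀⟩ := hm_bdd
  set C := max C₀ 0 with hCdef
  have hC : ∀ t ∈ Icc (0:ℝ) 1, |m t| ≤ C := fun t ht => (hC₀ t ht).trans (le_max_left _ _)
  have hC0 : 0 ≤ C := le_max_right _ _
  -- the infimum of η
  set s := sInf (η '' Icc (0:ℝ) 1) with hsdef
  have hcomp : IsCompact (η '' Icc (0:ℝ) 1) := isCompact_Icc.image_of_continuousOn hη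
  have hne : (η '' Icc (0:ℝ) 1).Nonempty :=
    ⟨η 0, mem_image_of_mem _ (by norm_num : (0:ℝ) ∈ Icc (0:ℝ) 1)⟩
  have hsmem : s ∈ η '' Icc (0:ℝ) 1 := hcomp.sInf_mem hne
  have hspos : 0 < s := by
    obtain ⟨t0, ht0, het⟩ := hsmem
    rw [← het]; exact hηpos t0 ht0
  have hsle : ∀ t ∈ Icc (0:ℝ) 1, s ≤ η t := fun t ht =>
    csInf_le hcomp.bddBelow (mem_image_of_mem _ ht)
  -- the supremum of the negative part of m
  set lam := sSup ((fun t => max (-(m t)) 0) '' Icc (0:ℝ) 1) with hlamdef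
  have hlbdd : BddAbove ((fun t => max (-(m t)) 0) '' Icc (0:ℝ) 1) := by
    refine ⟨C, ?_⟩
    rintro x ⟨t, ht, rfl⟩
    exact max_le (le_trans (neg_le_abs _) (hC t ht)) hC0
  have hlam0 : 0 ≤ lam := by
    have h0 : max (-(m 0)) 0 ∈ (fun t => max (-(m t)) 0) '' Icc (0:ℝ) 1 :=
      mem_image_of_mem _ (by norm_num)
    exact le_trans (le_max_right _ _) (le_csSup hlbdd h0)
  have hlamle : ∀ t ∈ Icc (0:ℝ) 1, -(m t) ≤ lam := fun t ht =>
    le_trans (le_max_left _ _) (le_csSup hlbdd (mem_image_of_mem _ ht))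
  have hls : lam < s * Real.pi ^ 2 := by
    have := (div_lt_iff₀ hspos).1 hsup
    linarith
  -- choice of k
  set k := (Real.sqrt (lam / s) + Real.pi) / 2 with hkdef
  have hsqlt : Real.sqrt (lam / s) < Real.pi := by
    have h1 : lam / s < Real.pi ^ 2 := hsup
    calc Real.sqrt (lam / s) < Real.sqrt (Real.pi ^ 2) := by
          apply Real.sqrt_lt_sqrt (div_nonneg hlam0 hspos.le) h1
      _ = Real.pi := Real.sqrt_sq Real.pi_pos.le
  have hk0 : 0 < k := by
    rw [hkdef]
    have := Real.sqrt_nonneg (lam / s)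
    linarith [Real.pi_pos]
  have hkpi : k < Real.pi := by
    rw [hkdef]; linarith
  have hklam : lam < s * k ^ 2 := by
    have h1 : Real.sqrt (lam / s) < k := by
      rw [hkdef]; linarith
    have h2 : lam / s < k ^ 2 := by
      calc lam / s = Real.sqrt (lam / s) ^ 2 := (Real.sq_sqrt (div_nonneg hlam0 hspos.le)).symm
        _ < k ^ 2 := by
            apply pow_lt_pow_left₀ h1 (Real.sqrt_nonneg _) (by norm_num)
    calc lam = s * (lam / s) := by field_simp
      _ < s * k ^ 2 := by nlinarith
  -- the subsolution gbar
  set gbar : ℝ → ℝ := fun t => s * k * Real.tan (k * (1/2 - t)) with hgbardef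
  have hdom : ∀ t ∈ Icc (0:ℝ) 1, k * (1/2 - t) ∈ Ioo (-(Real.pi/2)) (Real.pi/2) := by
    intro t ht
    have h1 : -(1/2 : ℝ) ≤ 1/2 - t := by linarith [ht.2]
    have h2 : 1/2 - t ≤ (1/2 : ℝ) := by linarith [ht.1]
    constructor
    · nlinarith
    · nlinarith
  have hcosne : ∀ t ∈ Icc (0:ℝ) 1, Real.cos (k * (1/2 - t)) ≠ 0 := fun t ht =>
    (Real.cos_pos_of_mem_Ioo (hdom t ht)).ne'
  have hgbar_d : ∀ t ∈ Icc (0:ℝ) 1,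
      HasDerivAt gbar (-(s * k ^ 2) - (gbar t) ^ 2 / s) t := by
    intro t ht
    have hcne := hcosne t ht
    have hlin : HasDerivAt (fun v : ℝ => k * (1/2 - v)) (-k) t := by
      have h := ((hasDerivAt_id t).const_sub (1/2 : ℝ)).const_mul k
      simpa using h
    have htan : HasDerivAt (fun v : ℝ => Real.tan (k * (1/2 - v)))
        (1 / Real.cos (k * (1/2 - t)) ^ 2 * (-k)) t :=
      by have h := (Real.hasDerivAt_tan hcne).comp t hlin; exact h
    have h2 := htan.const_mul (s * k)
    refine h2.congr_deriv (Eq.symm ?_)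
    have h1c : (1:ℝ) + Real.tan (k * (1/2 - t)) ^ 2 = 1 / Real.cos (k * (1/2 - t)) ^ 2 := by
      rw [← Real.inv_one_add_tan_sq hcne]
      field_simp
    rw [hgbardef]
    simp only
    rw [← h1c]
    field_simp
    ring
  have hgbar_cont : ContinuousOn gbar (Icc (0:ℝ) 1) := fun t ht =>
    ((hgbar_d t ht).continuousAt).continuousWithinAt
  set g₀ := gbar 0 with hg₀def
  have hg₀val : g₀ = s * k * Real.tan (k / 2) := by
    have h : k * (1/2 - 0) = k / 2 := by ring
    rw [hg₀def, hgbardef]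
    simp only
    rw [h]
  have hg₀0 : 0 ≤ g₀ := by
    rw [hg₀val]
    have htn : 0 ≤ Real.tan (k / 2) := by
      apply Real.tan_nonneg_of_nonneg_of_le_pi_div_two (by linarith) (by linarith)
    positivity
  have hgbar_bdd : ∀ t ∈ Icc (0:ℝ) 1, |gbar t| ≤ g₀ := by
    intro t ht
    have hmem := hdom t ht
    have hmem2 : k / 2 ∈ Ioo (-(Real.pi/2)) (Real.pi/2) := by
      constructor <;> [nlinarith [Real.pi_pos]; nlinarith]
    have hmem3 : -(k / 2) ∈ Ioo (-(Real.pi/2)) (Real.pi/2) := by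
      constructor <;> [nlinarith; nlinarith [Real.pi_pos]]
    have hle1 : Real.tan (k * (1/2 - t)) ≤ Real.tan (k / 2) := by
      apply Real.strictMonoOn_tan.monotoneOn hmem hmem2
      have := ht.1; nlinarith
    have hle2 : Real.tan (-(k / 2)) ≤ Real.tan (k * (1/2 - t)) := by
      apply Real.strictMonoOn_tan.monotoneOn hmem3 hmem
      have := ht.2; nlinarith
    rw [Real.tan_neg] at hle2
    rw [hg₀val, hgbardef]
    simp only
    rw [abs_le]
    have hsk : 0 ≤ s * k := by positivity
    constructor <;> nlinarith
  set M := g₀ + C with hMdef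
  have hM0 : 0 ≤ M := by rw [hMdef]; linarith
  have hgbarM : ∀ t ∈ Icc (0:ℝ) 1, |gbar t| ≤ M := fun t ht =>
    (hgbar_bdd t ht).trans (by rw [hMdef]; linarith)
  -- truncation
  set P : ℝ → ℝ := fun x => max (-M) (min M x) with hPdef
  have hPcont : Continuous P := continuous_const.max (continuous_const.min continuous_id)
  have hPabs : ∀ x, |P x| ≤ M := by
    intro x
    rw [abs_le]
    constructor
    · exact le_max_left _ _
    · exact max_le (by linarith) (min_le_left _ _)
  have hPeq : ∀ x, |x| ≤ M → P x = x := by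
    intro x hx
    rw [abs_le] at hx
    rw [hPdef]
    simp only
    rw [min_eq_right hx.2, max_eq_right hx.1]
  have hPlip : ∀ x y, |P x - P y| ≤ |x - y| := by
    intro x y
    rw [hPdef]
    simp only
    rw [max_comm (-M) (min M x), max_comm (-M) (min M y)]
    refine le_trans (abs_max_sub_max_le_abs _ _ _) ?_
    refine le_trans (abs_min_sub_min_le_max M x M y) ?_
    simp
  have hPsq : ∀ x y, |P x ^ 2 - P y ^ 2| ≤ 2 * M * |x - y| := by
    intro x y
    have h1 : P x ^ 2 - P y ^ 2 = (P x + P y) * (P x - P y) := by ring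
    rw [h1, abs_mul]
    have h2 : |P x + P y| ≤ 2 * M := by
      calc |P x + P y| ≤ |P x| + |P y| := abs_add_le _ _
        _ ≤ 2 * M := by linarith [hPabs x, hPabs y]
    exact mul_le_mul h2 (hPlip x y) (abs_nonneg _) (by linarith)
  -- the Picard operator on C([0,1])
  set pj : ℝ → ↥(Icc (0:ℝ) 1) := Set.projIcc 0 1 zero_le_one with hpjdef
  have hpjcont : Continuous pj := continuous_projIcc
  set F : C(↥(Icc (0:ℝ) 1), ℝ) → ℝ → ℝ :=
    fun G u => m u - (P (G (pj u))) ^ 2 / η u with hFdef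
  have hGext : ∀ G : C(↥(Icc (0:ℝ) 1), ℝ), Continuous fun u => P (G (pj u)) :=
    fun G => hPcont.comp (G.continuous.comp hpjcont)
  have hηae : AEMeasurable η (volume.restrict (Icc (0:ℝ) 1)) :=
    hη.aemeasurable measurableSet_Icc
  have hFmeas : ∀ G, AEStronglyMeasurable (F G) (volume.restrict (Icc (0:ℝ) 1)) := by
    intro G
    apply AEMeasurable.aestronglyMeasurable
    apply AEMeasurable.sub hm_meas.aemeasurable
    exact (((hGext G).measurable.pow_const 2).aemeasurable).div hηae
  have hFbd : ∀ G, ∀ u ∈ Icc (0:ℝ) 1, |F G u| ≤ C + M ^ 2 / s := by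
    intro G u hu
    have h1 : 0 < η u := hηpos u hu
    have h2 : s ≤ η u := hsle u hu
    have h3 : (P (G (pj u))) ^ 2 ≤ M ^ 2 := by
      have ha := hPabs (G (pj u))
      have hb := abs_nonneg (P (G (pj u)))
      nlinarith [neg_abs_le (P (G (pj u))), le_abs_self (P (G (pj u)))]
    have h4 : (0:ℝ) ≤ (P (G (pj u))) ^ 2 / η u := div_nonneg (sq_nonneg _) h1.le
    have h5 : (P (G (pj u))) ^ 2 / η u ≤ M ^ 2 / s :=
      div_le_div₀ (by positivity) h3 hspos h2
    calc |F G u| ≤ |m u| + |(P (G (pj u))) ^ 2 / η u| := abs_sub _ _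
      _ ≤ C + M ^ 2 / s := by
          rw [abs_of_nonneg h4]
          exact add_le_add (hC u hu) h5
  have hvol : volume (Icc (0:ℝ) 1) < ⊤ := measure_Icc_lt_top
  have hFint : ∀ G, IntegrableOn (F G) (Icc (0:ℝ) 1) := by
    intro G
    apply Integrable.mono' (integrableOn_const (C := C + M ^ 2 / s) hvol.ne) (hFmeas G)
    filter_upwards [ae_restrict_mem measurableSet_Icc] with u hu
    rw [Real.norm_eq_abs]
    exact hFbd G u hu
  have hFii : ∀ G, ∀ a b : ℝ, a ∈ Icc (0:ℝ) 1 → b ∈ Icc (0:ℝ) 1 →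
      IntervalIntegrable (F G) volume a b := by
    intro G a b ha hb
    exact ((hFint G).mono_set (uIcc_subset_Icc ha hb)).intervalIntegrable
  have hTc : ∀ G : C(↥(Icc (0:ℝ) 1), ℝ),
      Continuous fun t : ↥(Icc (0:ℝ) 1) => g₀ + ∫ u in (0:ℝ)..(t:ℝ), F G u := by
    intro G
    have h1 : ContinuousOn (fun x : ℝ => ∫ u in (0:ℝ)..x, F G u) (Icc (0:ℝ) 1) := by
      have h2 := intervalIntegral.continuousOn_primitive_interval (a := (0:ℝ)) (b := (1:ℝ))
        (μ := volume) (f := F G) (by rw [uIcc_of_le zero_le_one]; exact hFint G)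
      rwa [uIcc_of_le zero_le_one] at h2
    exact continuous_const.add (h1.comp_continuous continuous_subtype_val (fun x => x.2))
  set T : C(↥(Icc (0:ℝ) 1), ℝ) → C(↥(Icc (0:ℝ) 1), ℝ) :=
    fun G => ContinuousMap.mk _ (hTc G) with hTdef
  have hTapp : ∀ G t, T G t = g₀ + ∫ u in (0:ℝ)..(t:ℝ), F G u := fun G t => rfl
  set Kc := 2 * M / s with hKcdef
  have hKc0 : 0 ≤ Kc := div_nonneg (by linarith) hspos.le
  have hFdiff : ∀ G H : C(↥(Icc (0:ℝ) 1), ℝ), ∀ u ∈ Icc (0:ℝ) 1,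
      |F G u - F H u| ≤ Kc * |G (pj u) - H (pj u)| := by
    intro G H u hu
    have hη1 : 0 < η u := hηpos u hu
    have hη0 : η u ≠ 0 := hη1.ne'
    have h1 : F G u - F H u = ((P (H (pj u))) ^ 2 - (P (G (pj u))) ^ 2) / η u := by
      rw [hFdef]
      field_simp
      ring
    rw [h1, abs_div, abs_of_pos hη1]
    have h2 : |(P (H (pj u))) ^ 2 - (P (G (pj u))) ^ 2| ≤ 2 * M * |G (pj u) - H (pj u)| := by
      have h3 := hPsq (H (pj u)) (G (pj u))
      rwa [abs_sub_comm (H (pj u)) (G (pj u))] at h3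
    calc |(P (H (pj u))) ^ 2 - (P (G (pj u))) ^ 2| / η u
        ≤ (2 * M * |G (pj u) - H (pj u)|) / η u := by
          gcongr
      _ ≤ (2 * M * |G (pj u) - H (pj u)|) / s :=
          div_le_div_of_nonneg_left (by positivity) hspos (hsle u hu)
      _ = Kc * |G (pj u) - H (pj u)| := by rw [hKcdef]; ring
  have hiter : ∀ (G H : C(↥(Icc (0:ℝ) 1), ℝ)) (n : ℕ) (t : ↥(Icc (0:ℝ) 1)),
      |(T^[n] G) t - (T^[n] H) t| ≤ Kc ^ n * (t:ℝ) ^ n / n.factorial * dist G H := by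
    intro G H n
    induction n with
    | zero =>
      intro t
      simp only [Function.iterate_zero, id_eq, pow_zero, Nat.factorial_zero, Nat.cast_one]
      have h1 : |G t - H t| = dist (G t) (H t) := (Real.dist_eq _ _).symm
      rw [h1]
      have := ContinuousMap.dist_apply_le_dist (f := G) (g := H) t
      linarith
    | succ n ih =>
      intro t
      rw [Function.iterate_succ_apply', Function.iterate_succ_apply']
      rw [hTapp, hTapp]
      have ht0 : (0:ℝ) ≤ (t:ℝ) := t.2.1
      have ht1 : (t:ℝ) ≤ 1 := t.2.2
      have htI : ((t:ℝ)) ∈ Icc (0:ℝ) 1 := t.2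
      have h0I : (0:ℝ) ∈ Icc (0:ℝ) 1 := by norm_num
      have hintG := hFii (T^[n] G) 0 (t:ℝ) h0I htI
      have hintH := hFii (T^[n] H) 0 (t:ℝ) h0I htI
      have heq : (g₀ + ∫ u in (0:ℝ)..(t:ℝ), F (T^[n] G) u)
          - (g₀ + ∫ u in (0:ℝ)..(t:ℝ), F (T^[n] H) u)
          = ∫ u in (0:ℝ)..(t:ℝ), (F (T^[n] G) u - F (T^[n] H) u) := by
        rw [intervalIntegral.integral_sub hintG hintH]
        ring
      rw [heq]
      have hb : ∀ u ∈ Icc (0:ℝ) (t:ℝ), |F (T^[n] G) u - F (T^[n] H) u|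
          ≤ Kc ^ (n+1) * u ^ n / n.factorial * dist G H := by
        intro u hu
        have huI : u ∈ Icc (0:ℝ) 1 := ⟨hu.1, hu.2.trans ht1⟩
        have h1 := hFdiff (T^[n] G) (T^[n] H) u huI
        have h2 := ih (pj u)
        have hval : ((pj u : ℝ)) = u := by
          rw [hpjdef]
          rw [projIcc_of_mem zero_le_one huI]
        rw [hval] at h2
        have h4 : |(T^[n] G) (pj u) - (T^[n] H) (pj u)| = dist ((T^[n] G) (pj u)) ((T^[n] H) (pj u)) :=
          (Real.dist_eq _ _).symm
        calc |F (T^[n] G) u - F (T^[n] H) u|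
            ≤ Kc * |(T^[n] G) (pj u) - (T^[n] H) (pj u)| := h1
          _ ≤ Kc * (Kc ^ n * u ^ n / n.factorial * dist G H) :=
              mul_le_mul_of_nonneg_left h2 hKc0
          _ = Kc ^ (n+1) * u ^ n / n.factorial * dist G H := by ring
      have hint1 : IntervalIntegrable (fun u => F (T^[n] G) u - F (T^[n] H) u) volume 0 (t:ℝ) :=
        hintG.sub hintH
      have hint2 : IntervalIntegrable
          (fun u => Kc ^ (n+1) * u ^ n / n.factorial * dist G H) volume 0 (t:ℝ) := by
        exact (((continuous_const.mul (continuous_pow n)).div_const _).mul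
          continuous_const).intervalIntegrable _ _
      calc |∫ u in (0:ℝ)..(t:ℝ), (F (T^[n] G) u - F (T^[n] H) u)|
          ≤ ∫ u in (0:ℝ)..(t:ℝ), |F (T^[n] G) u - F (T^[n] H) u| :=
            intervalIntegral.abs_integral_le_integral_abs ht0
        _ ≤ ∫ u in (0:ℝ)..(t:ℝ), Kc ^ (n+1) * u ^ n / n.factorial * dist G H := by
            apply intervalIntegral.integral_mono_on ht0 hint1.abs hint2
            exact hb
        _ = Kc ^ (n+1) * (t:ℝ) ^ (n+1) / (n+1).factorial * dist G H := by
            have hrw : (fun u : ℝ => Kc ^ (n+1) * u ^ n / n.factorial * dist G H)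
                = fun u : ℝ => (Kc ^ (n+1) / n.factorial * dist G H) * u ^ n := by
              funext u; ring
            rw [hrw, intervalIntegral.integral_const_mul, integral_pow]
            have hfac : ((n+1).factorial : ℝ) = (n+1) * n.factorial := by
              rw [Nat.factorial_succ]; push_cast; ring
            have hfn : (n.factorial : ℝ) ≠ 0 := Nat.cast_ne_zero.2 (Nat.factorial_ne_zero n)
            have hn1 : ((n:ℝ) + 1) ≠ 0 := by positivity
            rw [hfac]
            rw [zero_pow (Nat.succ_ne_zero n)]
            field_simp
            ring
  have hdistiter : ∀ (n : ℕ) (G H : C(↥(Icc (0:ℝ) 1), ℝ)),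
      dist (T^[n] G) (T^[n] H) ≤ Kc ^ n / n.factorial * dist G H := by
    intro n G H
    have hnn : (0:ℝ) ≤ Kc ^ n / n.factorial * dist G H := by positivity
    rw [ContinuousMap.dist_le hnn]
    intro t
    rw [Real.dist_eq]
    refine (hiter G H n t).trans ?_
    have ht0 : (0:ℝ) ≤ (t:ℝ) := t.2.1
    have ht1 : (t:ℝ) ≤ 1 := t.2.2
    have h1 : (t:ℝ) ^ n ≤ 1 := pow_le_one₀ ht0 ht1
    have h2 : Kc ^ n * (t:ℝ) ^ n ≤ Kc ^ n := by
      nlinarith [pow_nonneg hKc0 n, pow_nonneg ht0 n]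
    have h3 : (0:ℝ) < n.factorial := by positivity
    have h4 : Kc ^ n * (t:ℝ) ^ n / n.factorial ≤ Kc ^ n / n.factorial := by gcongr
    exact mul_le_mul_of_nonneg_right h4 dist_nonneg
  -- fixed point
  obtain ⟨N, hN⟩ : ∃ N : ℕ, Kc ^ N / N.factorial < 1 := by
    have h1 := FloorSemiring.tendsto_pow_div_factorial_atTop Kc
    exact (h1.eventually (gt_mem_nhds one_pos)).exists
  have hκnn : (0:ℝ) ≤ Kc ^ N / N.factorial := by positivity
  set κ : NNReal := ⟨Kc ^ N / N.factorial, hκnn⟩ with hκdef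
  have hκ1 : κ < 1 := by
    rw [← NNReal.coe_lt_coe]
    exact hN
  have hlip : LipschitzWith κ (T^[N]) :=
    LipschitzWith.of_dist_le_mul fun G H => hdistiter N G H
  have hcontr : ContractingWith κ (T^[N]) := ⟨hκ1, hlip⟩
  set xf := ContractingWith.fixedPoint (T^[N]) hcontr with hxfdef
  have hfixN : T^[N] xf = xf := hcontr.fixedPoint_isFixedPt
  have hfix : T xf = xf := by
    have h1 : T^[N] (T xf) = T xf := by
      rw [← Function.iterate_succ_apply, Function.iterate_succ_apply', hfixN]
    have h2 := hcontr.fixedPoint_unique h1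
    rw [← hxfdef] at h2
    exact h2
  -- the fixed point as a function on ℝ
  set gc : ℝ → ℝ := fun u => xf (pj u) with hgcdef
  have hgccont : Continuous gc := xf.continuous.comp hpjcont
  have hfixeq : ∀ t ∈ Icc (0:ℝ) 1, gc t = g₀ + ∫ u in (0:ℝ)..t, F xf u := by
    intro t ht
    have h1 : (T xf) (pj t) = xf (pj t) := by rw [hfix]
    have h2 : ((pj t : ℝ)) = t := by
      rw [hpjdef, projIcc_of_mem zero_le_one ht]
    rw [hgcdef]
    simp only
    rw [← h1, hTapp, h2]
  have hgc0 : gc 0 = g₀ := by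
    rw [hfixeq 0 (by norm_num), intervalIntegral.integral_same]; ring
  -- upper bound
  have hup : ∀ t ∈ Icc (0:ℝ) 1, gc t ≤ M := by
    intro t ht
    have h1 : ∫ u in (0:ℝ)..t, F xf u ≤ ∫ u in (0:ℝ)..t, C := by
      apply intervalIntegral.integral_mono_on ht.1 (hFii xf 0 t (by norm_num) ht)
        intervalIntegrable_const
      intro u hu
      have huI : u ∈ Icc (0:ℝ) 1 := ⟨hu.1, hu.2.trans ht.2⟩
      have h2 : (0:ℝ) ≤ (P (xf (pj u))) ^ 2 / η u := div_nonneg (sq_nonneg _) (hηpos u huI).le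
      have h3 := (abs_le.1 (hC u huI)).2
      rw [hFdef]
      simp only
      linarith
    rw [intervalIntegral.integral_const, smul_eq_mul] at h1
    have h4 := hfixeq t ht
    have h5 : gc t ≤ g₀ + (t - 0) * C := by rw [h4]; linarith
    rw [hMdef]
    nlinarith [ht.2, ht.1, hC0]
  -- lower bound via cross_aux
  set φ : ℝ → ℝ := fun u => gc u - gbar u with hφdef
  have hφcont : ContinuousOn φ (Icc (0:ℝ) 1) := hgccont.continuousOn.sub hgbar_cont
  have hφzero : φ 0 = 0 := by
    simp only [hφdef]
    rw [hgc0, hg₀def]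
    ring
  have hkey : ∀ τ t, 0 ≤ τ → τ ≤ t → t ≤ 1 → φ τ = 0 → (∀ u ∈ Icc τ t, φ u ≤ 0) →
      -φ t ≤ Kc * ∫ u in τ..t, -φ u := by
    intro τ t hτ0 hτt ht1 hφτ hφneg
    have hτI : τ ∈ Icc (0:ℝ) 1 := ⟨hτ0, hτt.trans ht1⟩
    have htI : t ∈ Icc (0:ℝ) 1 := ⟨hτ0.trans hτt, ht1⟩
    have hmemsub : Icc τ t ⊆ Icc (0:ℝ) 1 := fun u hu => ⟨hτ0.trans hu.1, hu.2.trans ht1⟩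
    set gb' : ℝ → ℝ := fun u => -(s * k ^ 2) - (gbar u) ^ 2 / s with hgb'def
    have hgb'cont : ContinuousOn gb' (Icc τ t) :=
      continuousOn_const.sub (((hgbar_cont.mono hmemsub).pow 2).div_const s)
    have hgb'ii : IntervalIntegrable gb' volume τ t := by
      apply ContinuousOn.intervalIntegrable
      rwa [uIcc_of_le hτt]
    have hgbint : ∫ u in τ..t, gb' u = gbar t - gbar τ := by
      apply intervalIntegral.integral_eq_sub_of_hasDerivAt
      · intro u hu
        rw [uIcc_of_le hτt] at hu
        exact hgbar_d u (hmemsub hu)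
      · exact hgb'ii
    have hgcdiff : gc t - gc τ = ∫ u in τ..t, F xf u := by
      rw [hfixeq t htI, hfixeq τ hτI]
      rw [← intervalIntegral.integral_interval_sub_left (hFii xf 0 t (by norm_num) htI)
        (hFii xf 0 τ (by norm_num) hτI)]
      ring
    have hFiixt : IntervalIntegrable (F xf) volume τ t := hFii xf τ t hτI htI
    have hφteq : -φ t = ∫ u in τ..t, (gb' u - F xf u) := by
      rw [intervalIntegral.integral_sub hgb'ii hFiixt, hgbint, ← hgcdiff]
      simp only [hφdef] at hφτ ⊢
      linarith
    rw [hφteq, ← intervalIntegral.integral_const_mul]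
    apply intervalIntegral.integral_mono_on hτt (hgb'ii.sub hFiixt)
    · apply ContinuousOn.intervalIntegrable
      rw [uIcc_of_le hτt]
      exact continuousOn_const.mul
        ((hgccont.continuousOn.mono hmemsub).sub (hgbar_cont.mono hmemsub)).neg
    · intro u hu
      have huI := hmemsub hu
      have hη1 : 0 < η u := hηpos u huI
      have hη2 : s ≤ η u := hsle u huI
      have hmu : -(m u) ≤ lam := hlamle u huI
      have hbar2 : gbar u ^ 2 / η u ≤ gbar u ^ 2 / s :=
        div_le_div_of_nonneg_left (sq_nonneg _) hspos hη2
      have hPg : P (gbar u) = gbar u := hPeq _ (hgbarM u huI)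
      have hXeq : P (gc u) ^ 2 - gbar u ^ 2 = P (gc u) ^ 2 - P (gbar u) ^ 2 := by rw [hPg]
      have h6 : |P (gc u) ^ 2 - gbar u ^ 2| ≤ 2 * M * |gc u - gbar u| := by
        rw [hXeq]; exact hPsq _ _
      have h7 : (P (gc u) ^ 2 - gbar u ^ 2) / η u ≤ |P (gc u) ^ 2 - gbar u ^ 2| / s := by
        calc (P (gc u) ^ 2 - gbar u ^ 2) / η u ≤ |P (gc u) ^ 2 - gbar u ^ 2| / η u := by
              gcongr
              exact le_abs_self _
          _ ≤ |P (gc u) ^ 2 - gbar u ^ 2| / s :=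
              div_le_div_of_nonneg_left (abs_nonneg _) hspos hη2
      have h8 : |gc u - gbar u| = -(φ u) := by
        simp only [hφdef]
        exact abs_of_nonpos (hφneg u hu)
      have hXs : |P (gc u) ^ 2 - gbar u ^ 2| / s ≤ 2 * M * -(φ u) / s := by
        gcongr
        rw [← h8]
        exact h6.trans_eq (by rw [h8])
      have hsplit : P (gc u) ^ 2 / η u = (P (gc u) ^ 2 - gbar u ^ 2) / η u + gbar u ^ 2 / η u := by
        ring
      have hKceq : Kc * -(φ u) = 2 * M * -(φ u) / s := by rw [hKcdef]; ring
      have hFval : F xf u = m u - P (gc u) ^ 2 / η u := rfl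
      have hgb'val : gb' u = -(s * k ^ 2) - gbar u ^ 2 / s := rfl
      rw [hgb'val, hFval]
      linarith [hmu, hbar2, h7, hXs, hsplit, hKceq, hklam]
  have hlow := cross_aux zero_le_one hKc0 hφcont hφzero hkey
  have hgcM : ∀ u ∈ Icc (0:ℝ) 1, |gc u| ≤ M := by
    intro u hu
    rw [abs_le]
    refine ⟨?_, hup u hu⟩
    have h1 := hlow u hu
    simp only [hφdef] at h1
    have h2 := (abs_le.1 (hgbarM u hu)).1
    linarith
  -- conclusion
  refine ⟨gc, fun u => m u - (gc u) ^ 2 / η u, ?_, ?_, ?_⟩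
  · apply Integrable.mono' (integrableOn_const (C := C + M ^ 2 / s) hvol.ne)
    · apply AEMeasurable.aestronglyMeasurable
      exact hm_meas.aemeasurable.sub
        (((hgccont.measurable.pow_const 2).aemeasurable).div hηae)
    · filter_upwards [ae_restrict_mem measurableSet_Icc] with u hu
      rw [Real.norm_eq_abs]
      have h1 : 0 < η u := hηpos u hu
      have h3 : (gc u) ^ 2 ≤ M ^ 2 := by
        have ha := hgcM u hu
        nlinarith [neg_abs_le (gc u), le_abs_self (gc u), abs_nonneg (gc u)]
      have h4 : (0:ℝ) ≤ (gc u) ^ 2 / η u := div_nonneg (sq_nonneg _) h1.le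
      have h5 : (gc u) ^ 2 / η u ≤ M ^ 2 / s := div_le_div₀ (by positivity) h3 hspos (hsle u hu)
      calc |m u - (gc u) ^ 2 / η u| ≤ |m u| + |(gc u) ^ 2 / η u| := abs_sub _ _
        _ ≤ C + M ^ 2 / s := by
            rw [abs_of_nonneg h4]
            exact add_le_add (hC u hu) h5
  · intro t ht
    rw [hfixeq t ht, hgc0]
    congr 1
    apply intervalIntegral.integral_congr
    intro u hu
    rw [uIcc_of_le ht.1] at hu
    have huI : u ∈ Icc (0:ℝ) 1 := ⟨hu.1, hu.2.trans ht.2⟩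
    have h1 : P (gc u) = gc u := hPeq _ (hgcM u huI)
    show F xf u = m u - (gc u) ^ 2 / η u
    rw [hFdef]
    simp only
    rw [show P (xf (pj u)) = P (gc u) from rfl, h1]
  · apply Filter.Eventually.of_forall
    intro t
    ring

lemma stmt4_part2 (η m : ℝ → ℝ)
    (hη : ContinuousOn η (Icc (0:ℝ) 1)) (hηpos : ∀ t ∈ Icc (0:ℝ) 1, 0 < η t)
    (c : ℝ) (hc0 : 0 ≤ c) (hmc : ∀ᵐ t ∂(volume.restrict (Icc (0:ℝ) 1)), m t ≤ -c)
    (hcS : Real.pi ^ 2 ≤ c / sSup (η '' Icc (0:ℝ) 1)) : ¬ HasACRiccatiSol η m := by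
  rintro ⟨g, g', hg'int, hgint, hgeq⟩
  set S := sSup (η '' Icc (0:ℝ) 1) with hSdef
  have hcomp : IsCompact (η '' Icc (0:ℝ) 1) := isCompact_Icc.image_of_continuousOn hη
  have hne : (η '' Icc (0:ℝ) 1).Nonempty :=
    ⟨η 0, mem_image_of_mem _ (by norm_num : (0:ℝ) ∈ Icc (0:ℝ) 1)⟩
  have hSmem : S ∈ η '' Icc (0:ℝ) 1 := hcomp.sSup_mem hne
  have hSpos : 0 < S := by
    obtain ⟨t0, ht0, het⟩ := hSmem
    rw [← het]; exact hηpos t0 ht0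
  have hle : ∀ t ∈ Icc (0:ℝ) 1, η t ≤ S := fun t ht =>
    le_csSup hcomp.bddAbove (mem_image_of_mem _ ht)
  set k := Real.sqrt (c / S) with hkdef
  have hk2 : k ^ 2 = c / S := Real.sq_sqrt (div_nonneg hc0 hSpos.le)
  have hkpi : Real.pi ≤ k := by
    rw [hkdef]
    calc Real.pi = Real.sqrt (Real.pi ^ 2) := (Real.sqrt_sq Real.pi_pos.le).symm
      _ ≤ Real.sqrt (c / S) := Real.sqrt_le_sqrt hcS
  have hk0 : 0 < k := lt_of_lt_of_le Real.pi_pos hkpi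
  have hSk2 : S * k ^ 2 = c := by
    rw [hk2]; field_simp
  set θ := Real.arctan (g 0 / (S * k)) with hθdef
  have hθmem : θ ∈ Ioo (-(Real.pi/2)) (Real.pi/2) :=
    ⟨Real.neg_pi_div_two_lt_arctan _, Real.arctan_lt_pi_div_two _⟩
  set Y : ℝ → ℝ := fun t => S * k * Real.tan (θ - k * t) with hYdef
  have hY0 : Y 0 = g 0 := by
    have : θ - k * 0 = θ := by ring
    rw [hYdef]
    simp only [mul_zero, sub_zero, hθdef, Real.tan_arctan]
    field_simp
  set tstar := (θ + Real.pi/2)/k with htsdef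
  have htstar1 : tstar < 1 := by
    rw [htsdef, div_lt_one hk0]
    linarith [hθmem.2]
  have hdom : ∀ u, 0 ≤ u → u < tstar → θ - k * u ∈ Ioo (-(Real.pi/2)) (Real.pi/2) := by
    intro u hu0 hu1
    constructor
    · have : k * u < θ + Real.pi/2 := by
        rw [htsdef, lt_div_iff₀ hk0] at hu1
        linarith [hu1]
      linarith
    · have : 0 ≤ k * u := mul_nonneg hk0.le hu0
      linarith [hθmem.2]
  have hcosne : ∀ u, 0 ≤ u → u < tstar → Real.cos (θ - k * u) ≠ 0 := fun u h0 h1 =>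
    (Real.cos_pos_of_mem_Ioo (hdom u h0 h1)).ne'
  have hYd : ∀ u, 0 ≤ u → u < tstar → HasDerivAt Y (-c - (Y u) ^ 2 / S) u := by
    intro u h0 h1
    have hcne := hcosne u h0 h1
    have hlin : HasDerivAt (fun v : ℝ => θ - k * v) (-k) u := by
      simpa using ((hasDerivAt_id u).const_mul k).const_sub θ
    have htan : HasDerivAt (fun v : ℝ => Real.tan (θ - k * v))
        (1 / Real.cos (θ - k * u) ^ 2 * (-k)) u :=
      by have h := (Real.hasDerivAt_tan hcne).comp u hlin; exact h
    have := htan.const_mul (S * k)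
    refine this.congr_deriv (Eq.symm ?_)
    have h1c : (1:ℝ) + Real.tan (θ - k * u) ^ 2 = 1 / Real.cos (θ - k * u) ^ 2 := by
      rw [← Real.inv_one_add_tan_sq hcne]
      rw [one_div, inv_inv]
    rw [hYdef]
    simp only
    rw [← h1c, ← hSk2]
    field_simp
    ring
  -- continuity and boundedness of g on [0,1]
  have hg'int01 : IntervalIntegrable g' volume 0 1 := by
    have : IntegrableOn g' (uIcc (0:ℝ) 1) := by rwa [uIcc_of_le zero_le_one]
    exact this.intervalIntegrable
  have hgc : ContinuousOn g (Icc (0:ℝ) 1) := by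
    have hP : ContinuousOn (fun t => g 0 + ∫ s in (0:ℝ)..t, g' s) (Icc (0:ℝ) 1) := by
      apply ContinuousOn.add continuousOn_const
      have := intervalIntegral.continuousOn_primitive_interval
        (a := (0:ℝ)) (b := (1:ℝ)) (μ := volume) (f := g')
        (by rwa [uIcc_of_le zero_le_one])
      rwa [uIcc_of_le zero_le_one] at this
    exact hP.congr hgint
  obtain ⟨B, hB⟩ := isCompact_Icc.exists_bound_of_continuousOn hgc
  have hB' : ∀ t ∈ Icc (0:ℝ) 1, |g t| ≤ B := by simpa using hB
  have hB0 : 0 ≤ B := le_trans (abs_nonneg _) (hB' 0 (by norm_num))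
  -- choose t₁
  set α := Real.arctan (-(B+1)/(S*k)) with hαdef
  set γ := min α θ with hγdef
  have hγmem : γ ∈ Ioo (-(Real.pi/2)) (Real.pi/2) := by
    constructor
    · exact lt_min (Real.neg_pi_div_two_lt_arctan _) hθmem.1
    · exact lt_of_le_of_lt (min_le_right _ _) hθmem.2
  set t₁ := (θ - γ)/k with ht₁def
  have ht₁0 : 0 ≤ t₁ := div_nonneg (by linarith [min_le_right α θ]) hk0.le
  have ht₁star : t₁ < tstar := by
    rw [ht₁def, htsdef, div_lt_div_iff_of_pos_right hk0]
    linarith [hγmem.1]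
  have ht₁1 : t₁ < 1 := lt_trans ht₁star htstar1
  have hθkt₁ : θ - k * t₁ = γ := by
    rw [ht₁def]; field_simp; ring
  have hYt₁ : Y t₁ ≤ -(B+1) := by
    have hαmem : α ∈ Ioo (-(Real.pi/2)) (Real.pi/2) :=
      ⟨Real.neg_pi_div_two_lt_arctan _, Real.arctan_lt_pi_div_two _⟩
    have htanle : Real.tan γ ≤ Real.tan α :=
      Real.strictMonoOn_tan.monotoneOn hγmem hαmem (min_le_left _ _)
    have htα : Real.tan α = -(B+1)/(S*k) := by rw [hαdef, Real.tan_arctan]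
    have hSk : 0 < S * k := mul_pos hSpos hk0
    calc Y t₁ = S * k * Real.tan γ := by rw [hYdef]; simp only; rw [hθkt₁]
      _ ≤ S * k * Real.tan α := by nlinarith
      _ = -(B+1) := by rw [htα]; field_simp
  -- bound for Y on [0, t₁]
  have hYc : ContinuousOn Y (Icc 0 t₁) := by
    intro u hu
    exact ((hYd u hu.1 (lt_of_le_of_lt hu.2 ht₁star)).continuousAt).continuousWithinAt
  obtain ⟨BY, hBY⟩ := isCompact_Icc.exists_bound_of_continuousOn hYc
  have hBY' : ∀ u ∈ Icc (0:ℝ) t₁, |Y u| ≤ BY := by simpa using hBY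
  set K := (BY + B)/S with hKdef
  have hK0 : 0 ≤ K := by
    apply div_nonneg _ hSpos.le
    have := le_trans (abs_nonneg _) (hBY' 0 (left_mem_Icc.2 ht₁0))
    linarith
  -- the comparison via cross_aux
  set φ : ℝ → ℝ := fun u => Y u - g u with hφdef
  have hsub01 : Icc (0:ℝ) t₁ ⊆ Icc (0:ℝ) 1 := Icc_subset_Icc le_rfl ht₁1.le
  have hkey : ∀ τ t, 0 ≤ τ → τ ≤ t → t ≤ t₁ → φ τ = 0 → (∀ u ∈ Icc τ t, φ u ≤ 0) →
      -φ t ≤ K * ∫ u in τ..t, -φ u := by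
    intro τ t hτ0 hτt htt₁ hφτ hφneg
    set Y' : ℝ → ℝ := fun u => -c - (Y u) ^ 2 / S with hY'def
    have hmemsub : Icc τ t ⊆ Icc (0:ℝ) t₁ := Icc_subset_Icc hτ0 htt₁
    have hYint : ∫ u in τ..t, Y' u = Y t - Y τ := by
      apply intervalIntegral.integral_eq_sub_of_hasDerivAt
      · intro u hu
        rw [uIcc_of_le hτt] at hu
        exact hYd u (hτ0.trans hu.1) (lt_of_le_of_lt (hu.2.trans htt₁) ht₁star)
      · apply ContinuousOn.intervalIntegrable
        rw [uIcc_of_le hτt]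
        apply ContinuousOn.sub continuousOn_const
        exact ((hYc.mono hmemsub).pow 2).div_const S
    have hint1 : IntervalIntegrable g' volume 0 t := by
      apply hg'int01.mono_set
      rw [uIcc_of_le (hτ0.trans hτt), uIcc_of_le zero_le_one]
      exact Icc_subset_Icc le_rfl (htt₁.trans ht₁1.le)
    have hint2 : IntervalIntegrable g' volume 0 τ := by
      apply hg'int01.mono_set
      rw [uIcc_of_le hτ0, uIcc_of_le zero_le_one]
      exact Icc_subset_Icc le_rfl ((hτt.trans htt₁).trans ht₁1.le)
    have hgg' : IntervalIntegrable g' volume τ t := by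
      apply hg'int01.mono_set
      rw [uIcc_of_le hτt, uIcc_of_le zero_le_one]
      exact hmemsub.trans hsub01
    have hYY : IntervalIntegrable Y' volume τ t := by
      apply ContinuousOn.intervalIntegrable
      rw [uIcc_of_le hτt]
      apply ContinuousOn.sub continuousOn_const
      exact ((hYc.mono hmemsub).pow 2).div_const S
    have hgsub : g t - g τ = ∫ u in τ..t, g' u := by
      have h1 := hgint t (hsub01 (hmemsub (right_mem_Icc.2 hτt)))
      have h2 := hgint τ (hsub01 (hmemsub (left_mem_Icc.2 hτt)))
      rw [h1, h2]
      rw [← intervalIntegral.integral_interval_sub_left hint1 hint2]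
      ring
    have hφt : -φ t = ∫ u in τ..t, (g' u - Y' u) := by
      have hYτt : Y τ = g τ := by
        have h0 : Y τ - g τ = 0 := hφτ
        linarith
      rw [intervalIntegral.integral_sub hgg' hYY, ← hgsub, hYint]
      simp only [hφdef]
      linarith [hYτt]
    rw [hφt]
    rw [← intervalIntegral.integral_const_mul]
    apply intervalIntegral.integral_mono_ae_restrict hτt (hgg'.sub hYY)
    · apply ContinuousOn.intervalIntegrable
      rw [uIcc_of_le hτt]
      exact continuousOn_const.mul
        ((hYc.mono hmemsub).sub (hgc.mono (hmemsub.trans hsub01))).neg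
    · -- a.e. inequality on Icc τ t
      have hsub' : Icc τ t ⊆ Icc (0:ℝ) 1 := hmemsub.trans hsub01
      have h1 : ∀ᵐ u ∂(volume.restrict (Icc τ t)), g' u + (g u) ^ 2 / η u = m u :=
        ae_restrict_of_ae_restrict_of_subset hsub' hgeq
      have h2 : ∀ᵐ u ∂(volume.restrict (Icc τ t)), m u ≤ -c :=
        ae_restrict_of_ae_restrict_of_subset hsub' hmc
      have h3 : ∀ᵐ u ∂(volume.restrict (Icc τ t)), u ∈ Icc τ t :=
        ae_restrict_mem measurableSet_Icc
      filter_upwards [h1, h2, h3] with u heq hm hu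
      have huI : u ∈ Icc (0:ℝ) 1 := hsub' hu
      have hη1 : 0 < η u := hηpos u huI
      have hη2 : η u ≤ S := hle u huI
      have hgu : g' u = m u - (g u) ^ 2 / η u := by linarith
      have hdiv : (g u) ^ 2 / S ≤ (g u) ^ 2 / η u :=
        div_le_div_of_nonneg_left (sq_nonneg _) hη1 hη2
      have hgle : g' u ≤ -c - (g u) ^ 2 / S := by
        rw [hgu]; linarith
      have hstep : g' u - Y' u ≤ ((Y u) ^ 2 - (g u) ^ 2) / S := by
        have hYu : Y' u = -c - (Y u) ^ 2 / S := rfl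
        have hdd : ((Y u) ^ 2 - (g u) ^ 2) / S = (Y u) ^ 2 / S - (g u) ^ 2 / S := by ring
        rw [hYu]
        linarith [hgle, hdd]
      have hfactor : ((Y u) ^ 2 - (g u) ^ 2) / S ≤ K * (-φ u) := by
        have hφu : φ u ≤ 0 := hφneg u hu
        have hYu : |Y u| ≤ BY := hBY' u (hmemsub hu)
        have hgu' : |g u| ≤ B := hB' u huI
        have habs : |Y u + g u| ≤ BY + B := by
          calc |Y u + g u| ≤ |Y u| + |g u| := abs_add_le _ _
            _ ≤ BY + B := by linarith
        have hfac : (Y u)^2 - (g u)^2 = (Y u + g u) * (φ u) := by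
          simp only [hφdef]; ring
        have h5 : (Y u + g u) * (φ u) ≤ |Y u + g u| * (-φ u) := by
          calc (Y u + g u) * (φ u) ≤ |(Y u + g u) * (φ u)| := le_abs_self _
            _ = |Y u + g u| * |φ u| := abs_mul _ _
            _ = |Y u + g u| * (-φ u) := by rw [abs_of_nonpos hφu]
        have h6 : |Y u + g u| * (-φ u) ≤ (BY + B) * (-φ u) :=
          mul_le_mul_of_nonneg_right habs (by linarith)
        have hKS : K * S = BY + B := by rw [hKdef]; field_simp
        have h7 : K * (-φ u) * S = (BY + B) * (-φ u) := by rw [← hKS]; ring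
        rw [hfac, div_le_iff₀ hSpos]
        linarith [h5, h6, h7]
      exact le_trans hstep hfactor
  have hφ0 : φ 0 = 0 := by simp only [hφdef]; rw [hY0]; ring
  have hφc : ContinuousOn φ (Icc 0 t₁) := hYc.sub (hgc.mono hsub01)
  have hfin := cross_aux ht₁0 hK0 hφc hφ0 hkey t₁ (right_mem_Icc.2 ht₁0)
  have : g t₁ ≤ Y t₁ := by
    simp only [hφdef] at hfin
    linarith
  have := hB' t₁ (hsub01 (right_mem_Icc.2 ht₁0))
  have habs := abs_le.1 this
  linarith [hYt₁]

/-- (i) if `sup [m]₋ / inf η < π²` then the Riccati equation `g' + g²/η = m` has an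
absolutely continuous solution on `[0,1]`; (ii) if `m ≤ -c` a.e. with `c / sup η ≥ π²` then
there is no such solution. -/
theorem stmt_4 (η m : ℝ → ℝ)
    (hη : ContinuousOn η (Icc (0:ℝ) 1)) (hηpos : ∀ t ∈ Icc (0:ℝ) 1, 0 < η t)
    (hm_meas : Measurable m) (hm_bdd : ∃ C, ∀ t ∈ Icc (0:ℝ) 1, |m t| ≤ C) :
    (sSup ((fun t => max (-(m t)) 0) '' Icc (0:ℝ) 1) / sInf (η '' Icc (0:ℝ) 1) < Real.pi ^ 2 →
      HasACRiccatiSol η m) ∧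
    (∀ c : ℝ, 0 ≤ c → (∀ᵐ t ∂(volume.restrict (Icc (0:ℝ) 1)), m t ≤ -c) →
      Real.pi ^ 2 ≤ c / sSup (η '' Icc (0:ℝ) 1) → ¬ HasACRiccatiSol η m) := by
  constructor
  · intro hsup
    exact stmt4_part1 η m hη hηpos hm_meas hm_bdd hsup
  · intro c hc0 hmc hcS
    exact stmt4_part2 η m hη hηpos c hc0 hmc hcS
end

section
/- The map q ↦ φ(q) is a bijection from the set { q ∈ L²([0,1]) : ∫₀¹ q(x) dx = 0 and ∫₀¹ exp(∫₀ˣ q(u) du) dx = 1 } onto Diff₀²([0,1]), and its inverse is the map ψ ↦ (log ψ')' = ψ''/ψ'. -/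
open Set MeasureTheory intervalIntegral

/-- Lebesgue measure restricted to `[0,1]`. -/
noncomputable def mu01 : MeasureTheory.Measure ℝ := MeasureTheory.volume.restrict (Icc (0:ℝ) 1)

/-- `Φ(q)(x) = ∫₀ˣ exp(∫₀ʸ q(u) du) dy`, i.e. the diffeomorphism `φ(q)` built from
`q ∈ L²([0,1])`. -/
noncomputable def PhiMap (q : MeasureTheory.Lp ℝ 2 mu01) : ℝ → ℝ :=
  fun x => ∫ y in (0:ℝ)..x, Real.exp (∫ u in (0:ℝ)..y, (q : ℝ → ℝ) u)

/-- The constraint set `{q ∈ L²([0,1]) : ∫₀¹ q = 0, ∫₀¹ exp(∫₀ˣ q) dx = 1}`. -/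
def Qset : Set (MeasureTheory.Lp ℝ 2 mu01) :=
  {q | (∫ x in (0:ℝ)..1, (q : ℝ → ℝ) x) = 0 ∧
    (∫ x in (0:ℝ)..1, Real.exp (∫ u in (0:ℝ)..x, (q : ℝ → ℝ) u)) = 1}

/-- `ψ, f, f', h` witness that `ψ ∈ Diff₀²([0,1])`: on `[0,1]`, `ψ = Id + f` with `f` of class
`C¹`, `f(0) = f(1) = 0`, `f'(0) = f'(1) = 0`, `1 + f' > 0`, and `f'` absolutely continuous with
derivative `h ∈ L²([0,1])`. -/
structure DiffWitness (ψ f f' h : ℝ → ℝ) : Prop where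
  eq_id_add : ∀ x ∈ Icc (0:ℝ) 1, ψ x = x + f x
  deriv_f : ∀ x ∈ Icc (0:ℝ) 1, HasDerivWithinAt f (f' x) (Icc (0:ℝ) 1) x
  cont_deriv : ContinuousOn f' (Icc (0:ℝ) 1)
  f_zero : f 0 = 0
  f_one : f 1 = 0
  f'_zero : f' 0 = 0
  f'_one : f' 1 = 0
  jac_pos : ∀ x ∈ Icc (0:ℝ) 1, 0 < 1 + f' x
  h_L2 : MeasureTheory.MemLp h 2 mu01
  f'_int : ∀ x ∈ Icc (0:ℝ) 1, f' x = ∫ u in (0:ℝ)..x, h u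

/-- The group `Diff₀²([0,1])` of Sobolev diffeomorphisms, as a set of real functions
(constrained on `[0,1]`). -/
def DiffSet : Set (ℝ → ℝ) := {ψ | ∃ f f' h : ℝ → ℝ, DiffWitness ψ f f' h}

lemma mu01_eq : mu01 = MeasureTheory.volume.restrict (Icc (0:ℝ) 1) := rfl

instance : IsFiniteMeasure mu01 := by
  constructor
  rw [mu01_eq, Measure.restrict_apply_univ, Real.volume_Icc]
  simp

lemma II_of {f : ℝ → ℝ} (hf : IntegrableOn f (Icc (0:ℝ) 1) volume) {x : ℝ}
    (hx : x ∈ Icc (0:ℝ) 1) : IntervalIntegrable f volume 0 x := by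
  apply IntegrableOn.intervalIntegrable
  rw [uIcc_of_le hx.1]
  exact hf.mono_set (Icc_subset_Icc le_rfl hx.2)

lemma abs_prim_le {f : ℝ → ℝ} (hf : IntegrableOn f (Icc (0:ℝ) 1) volume) {u : ℝ}
    (hu : u ∈ Icc (0:ℝ) 1) :
    |∫ v in (0:ℝ)..u, f v| ≤ ∫ v in Icc (0:ℝ) 1, |f v| := by
  have h1 : Ioc (0:ℝ) u ⊆ Icc (0:ℝ) 1 := fun y hy => ⟨hy.1.le, le_trans hy.2 hu.2⟩
  calc |∫ v in (0:ℝ)..u, f v| ≤ ∫ v in Set.uIoc (0:ℝ) u, ‖f v‖ := by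
        rw [← Real.norm_eq_abs]
        exact intervalIntegral.norm_integral_le_integral_norm_uIoc
    _ = ∫ v in Ioc (0:ℝ) u, |f v| := by rw [uIoc_of_le hu.1]; rfl
    _ ≤ ∫ v in Icc (0:ℝ) 1, |f v| := by
        apply setIntegral_mono_set hf.norm
        · exact Filter.Eventually.of_forall fun y => abs_nonneg _
        · exact Filter.Eventually.of_forall h1
lemma key_ftc {q : ℝ → ℝ} (hq : IntegrableOn q (Icc (0:ℝ) 1) volume)
    (g G : ℝ → ℝ) (hg : Continuous g) (hG : ∀ t, HasDerivAt G (g t) t)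
    {x : ℝ} (hx : x ∈ Icc (0:ℝ) 1) :
    ∫ u in (0:ℝ)..x, q u * g (∫ v in (0:ℝ)..u, q v)
      = G (∫ v in (0:ℝ)..x, q v) - G 0 := by
  set Q : ℝ → ℝ := fun y => ∫ v in (0:ℝ)..y, q v with hQdef
  set q1 : ℝ → ℝ := (Icc (0:ℝ) 1).indicator q with hq1def
  have hq1 : Integrable q1 volume := hq.integrable_indicator measurableSet_Icc
  have happrox : ∀ n : ℕ, ∃ φ : ℝ → ℝ, HasCompactSupport φ ∧
      (∫ u, ‖q1 u - φ u‖) ≤ ((n : ℝ) + 1)⁻¹ ∧ Continuous φ ∧ Integrable φ volume := fun n =>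
    hq1.exists_hasCompactSupport_integral_sub_le (by positivity)
  choose φ hφsupp hφdist hφcont hφint using happrox
  set ψ : ℕ → ℝ → ℝ := fun n y => ∫ v in (0:ℝ)..y, φ n v with hψdef
  set M : ℝ := ∫ v in Icc (0:ℝ) 1, |q v| with hMdef
  have hM0 : 0 ≤ M := setIntegral_nonneg measurableSet_Icc fun y _ => abs_nonneg _
  have hQb : ∀ u ∈ Icc (0:ℝ) 1, |Q u| ≤ M := fun u hu => abs_prim_le hq hu
  -- distance between ψ n and Q
  have hdist : ∀ n : ℕ, ∀ u ∈ Icc (0:ℝ) 1, |ψ n u - Q u| ≤ ((n : ℝ) + 1)⁻¹ := by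
    intro n u hu
    have hiiq : IntervalIntegrable q volume 0 u := II_of hq hu
    have hiiφ : IntervalIntegrable (φ n) volume 0 u := (hφint n).intervalIntegrable
    have hsub : ψ n u - Q u = ∫ v in (0:ℝ)..u, (φ n v - q v) :=
      (intervalIntegral.integral_sub hiiφ hiiq).symm
    rw [hsub]
    have h1 : Ioc (0:ℝ) u ⊆ Icc (0:ℝ) 1 := fun y hy => ⟨hy.1.le, le_trans hy.2 hu.2⟩
    calc |∫ v in (0:ℝ)..u, (φ n v - q v)| ≤ ∫ v in Set.uIoc (0:ℝ) u, ‖φ n v - q v‖ := by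
          rw [← Real.norm_eq_abs]
          exact intervalIntegral.norm_integral_le_integral_norm_uIoc
      _ = ∫ v in Ioc (0:ℝ) u, ‖q1 v - φ n v‖ := by
          rw [uIoc_of_le hu.1]
          apply setIntegral_congr_fun measurableSet_Ioc
          intro y hy
          show ‖φ n y - q y‖ = ‖q1 y - φ n y‖
          rw [hq1def, indicator_of_mem (h1 hy), norm_sub_rev]
      _ ≤ ∫ v, ‖q1 v - φ n v‖ := by
          apply setIntegral_le_integral ((hq1.sub (hφint n)).norm)
          exact Filter.Eventually.of_forall fun y => norm_nonneg _
      _ ≤ ((n : ℝ) + 1)⁻¹ := hφdist n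
  have hrinv : ∀ n : ℕ, (0:ℝ) < ((n : ℝ) + 1)⁻¹ := fun n => by positivity
  have hrinv1 : ∀ n : ℕ, ((n : ℝ) + 1)⁻¹ ≤ 1 := by
    intro n
    rw [inv_le_one_iff₀]
    right; linarith [Nat.cast_nonneg (α := ℝ) n]
  have htendr : Filter.Tendsto (fun n : ℕ => ((n : ℝ) + 1)⁻¹) Filter.atTop (nhds 0) := by
    simpa only [one_div] using (tendsto_one_div_add_atTop_nhds_zero_nat :
        Filter.Tendsto (fun n : ℕ => 1 / ((n : ℝ) + 1)) Filter.atTop (nhds 0))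
  have hconv : ∀ u ∈ Icc (0:ℝ) 1,
      Filter.Tendsto (fun n => ψ n u) Filter.atTop (nhds (Q u)) := by
    intro u hu
    rw [tendsto_iff_dist_tendsto_zero]
    apply squeeze_zero (fun n => dist_nonneg) (fun n => ?_) htendr
    rw [Real.dist_eq]
    exact hdist n u hu
  -- bound for g on the relevant compact set
  obtain ⟨B, hB⟩ := (isCompact_Icc (a := -(M+1)) (b := M+1)).exists_bound_of_continuousOn
    hg.continuousOn
  have hB0 : 0 ≤ B := le_trans (norm_nonneg (g 0)) (hB 0 (by constructor <;> linarith))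
  have hψK : ∀ n : ℕ, ∀ u ∈ Icc (0:ℝ) 1, ψ n u ∈ Icc (-(M+1)) (M+1) := by
    intro n u hu
    have h1 := hdist n u hu
    have h2 := hQb u hu
    have h3 := hrinv1 n
    rw [abs_le] at h1 h2
    rw [mem_Icc]
    constructor <;> nlinarith
  have hQK : ∀ u ∈ Icc (0:ℝ) 1, Q u ∈ Icc (-(M+1)) (M+1) := by
    intro u hu
    have h2 := hQb u hu
    rw [abs_le] at h2
    rw [mem_Icc]
    constructor <;> linarith
  -- derivative of ψ n and continuity
  have hψderiv : ∀ n y, HasDerivAt (ψ n) (φ n y) y := fun n y =>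
    intervalIntegral.integral_hasDerivAt_right ((hφint n).intervalIntegrable)
      ((hφcont n).stronglyMeasurableAtFilter _ _) (hφcont n).continuousAt
  have hψcont : ∀ n, Continuous (ψ n) :=
    fun n => continuous_iff_continuousAt.2 fun y => (hψderiv n y).continuousAt
  -- FTC for the approximations
  have hftc : ∀ n, ∫ u in (0:ℝ)..x, φ n u * g (ψ n u) = G (ψ n x) - G 0 := by
    intro n
    have h1 : ∀ u ∈ uIcc (0:ℝ) x, HasDerivAt (fun y => G (ψ n y)) (φ n u * g (ψ n u)) u := by
      intro u _
      have := (hG (ψ n u)).comp u (hψderiv n u)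
      rw [mul_comm]; exact this
    have h2 : IntervalIntegrable (fun u => φ n u * g (ψ n u)) volume 0 x :=
      ((hφcont n).mul (hg.comp (hψcont n))).intervalIntegrable 0 x
    have h3 := intervalIntegral.integral_eq_sub_of_hasDerivAt h1 h2
    have h4 : ψ n 0 = 0 := intervalIntegral.integral_same
    rw [h3, h4]
  -- integrability of the products
  have hIoc : Ioc (0:ℝ) x ⊆ Icc (0:ℝ) 1 := fun y hy => ⟨hy.1.le, le_trans hy.2 hx.2⟩
  have hI2 : ∀ n : ℕ, IntervalIntegrable (fun u => q u * g (ψ n u)) volume 0 x := by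
    intro n
    rw [intervalIntegrable_iff_integrableOn_Ioc_of_le hx.1]
    apply Integrable.mono ((hq.mono_set hIoc).norm.const_mul B)
    · exact (hq.mono_set hIoc).aestronglyMeasurable.mul
        (hg.comp (hψcont n)).aestronglyMeasurable.restrict
    · apply ae_restrict_of_forall_mem measurableSet_Ioc
      intro y hy
      have hyK := hψK n y (hIoc hy)
      have hgB := hB _ hyK
      calc ‖q y * g (ψ n y)‖ = ‖g (ψ n y)‖ * ‖q y‖ := by rw [norm_mul]; ring
        _ ≤ B * ‖q y‖ := mul_le_mul_of_nonneg_right hgB (norm_nonneg _)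
        _ ≤ ‖B * ‖q y‖‖ := le_abs_self _
  have hI1 : ∀ n : ℕ, IntervalIntegrable (fun u => (φ n u - q u) * g (ψ n u)) volume 0 x := by
    intro n
    have h2 : IntervalIntegrable (fun u => φ n u * g (ψ n u)) volume 0 x :=
      ((hφcont n).mul (hg.comp (hψcont n))).intervalIntegrable 0 x
    have h3 := h2.sub (hI2 n)
    simpa [sub_mul] using h3
  -- the first term tends to zero
  have hT1 : Filter.Tendsto (fun n => ∫ u in (0:ℝ)..x, (φ n u - q u) * g (ψ n u))
      Filter.atTop (nhds 0) := by
    apply squeeze_zero_norm (fun n => ?_) (by simpa using htendr.mul_const B)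
    · -- bound
      have hI1' : IntegrableOn (fun u => (φ n u - q u) * g (ψ n u)) (Ioc 0 x) volume := by
        rw [← intervalIntegrable_iff_integrableOn_Ioc_of_le hx.1]
        exact hI1 n
      calc ‖∫ u in (0:ℝ)..x, (φ n u - q u) * g (ψ n u)‖
          ≤ ∫ u in Set.uIoc (0:ℝ) x, ‖(φ n u - q u) * g (ψ n u)‖ :=
            intervalIntegral.norm_integral_le_integral_norm_uIoc
        _ = ∫ u in Ioc (0:ℝ) x, ‖(φ n u - q u) * g (ψ n u)‖ := by rw [uIoc_of_le hx.1]
        _ ≤ ∫ u in Ioc (0:ℝ) x, ‖q1 u - φ n u‖ * B := by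
            apply setIntegral_mono_on hI1'.norm
              (((hq1.sub (hφint n)).norm.mul_const B).integrableOn) measurableSet_Ioc
            intro y hy
            have hyK := hψK n y (hIoc hy)
            have hgB := hB _ hyK
            show ‖(φ n y - q y) * g (ψ n y)‖ ≤ ‖q1 y - φ n y‖ * B
            rw [norm_mul, hq1def, Set.indicator_of_mem (hIoc hy), norm_sub_rev]
            exact mul_le_mul_of_nonneg_left hgB (norm_nonneg _)
        _ = (∫ u in Ioc (0:ℝ) x, ‖q1 u - φ n u‖) * B := by
            rw [MeasureTheory.integral_mul_const]
        _ ≤ ((n : ℝ) + 1)⁻¹ * B := by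
            apply mul_le_mul_of_nonneg_right _ hB0
            calc ∫ u in Ioc (0:ℝ) x, ‖q1 u - φ n u‖
                ≤ ∫ u, ‖q1 u - φ n u‖ := by
                  apply setIntegral_le_integral ((hq1.sub (hφint n)).norm)
                  exact Filter.Eventually.of_forall fun y => norm_nonneg _
              _ ≤ ((n : ℝ) + 1)⁻¹ := hφdist n
  -- the second term tends to the desired integral
  have hT2 : Filter.Tendsto (fun n => ∫ u in (0:ℝ)..x, q u * g (ψ n u))
      Filter.atTop (nhds (∫ u in (0:ℝ)..x, q u * g (Q u))) := by
    apply intervalIntegral.tendsto_integral_filter_of_dominated_convergence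
      (fun u => |q u| * B)
    · apply Filter.Eventually.of_forall
      intro n
      rw [uIoc_of_le hx.1]
      exact (hq.mono_set hIoc).aestronglyMeasurable.mul
        (hg.comp (hψcont n)).aestronglyMeasurable.restrict
    · apply Filter.Eventually.of_forall
      intro n
      apply Filter.Eventually.of_forall
      intro y hy
      rw [uIoc_of_le hx.1] at hy
      have hyK := hψK n y (hIoc hy)
      have hgB := hB _ hyK
      rw [Real.norm_eq_abs, abs_mul]
      exact mul_le_mul_of_nonneg_left (by simpa [Real.norm_eq_abs] using hgB) (abs_nonneg _)
    · rw [intervalIntegrable_iff_integrableOn_Ioc_of_le hx.1]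
      exact ((hq.mono_set hIoc).norm.mul_const B)
    · apply Filter.Eventually.of_forall
      intro y hy
      rw [uIoc_of_le hx.1] at hy
      have hyI : y ∈ Icc (0:ℝ) 1 := hIoc hy
      exact (Filter.Tendsto.const_mul (q y) ((hg.continuousAt.tendsto).comp (hconv y hyI)))
  -- combine
  have hsplit : ∀ n : ℕ, ∫ u in (0:ℝ)..x, φ n u * g (ψ n u)
      = (∫ u in (0:ℝ)..x, (φ n u - q u) * g (ψ n u)) + ∫ u in (0:ℝ)..x, q u * g (ψ n u) := by
    intro n
    rw [← intervalIntegral.integral_add (hI1 n) (hI2 n)]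
    apply intervalIntegral.integral_congr
    intro u _
    ring
  have hlim1 : Filter.Tendsto (fun n => ∫ u in (0:ℝ)..x, φ n u * g (ψ n u))
      Filter.atTop (nhds (0 + ∫ u in (0:ℝ)..x, q u * g (Q u))) := by
    rw [show (fun n => ∫ u in (0:ℝ)..x, φ n u * g (ψ n u))
      = fun n => (∫ u in (0:ℝ)..x, (φ n u - q u) * g (ψ n u))
          + ∫ u in (0:ℝ)..x, q u * g (ψ n u) from funext hsplit]
    exact hT1.add hT2
  rw [zero_add] at hlim1
  have hlim2 : Filter.Tendsto (fun n => ∫ u in (0:ℝ)..x, φ n u * g (ψ n u))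
      Filter.atTop (nhds (G (Q x) - G 0)) := by
    rw [show (fun n => ∫ u in (0:ℝ)..x, φ n u * g (ψ n u))
      = fun n => G (ψ n x) - G 0 from funext hftc]
    exact (((hG (Q x)).continuousAt.tendsto).comp (hconv x hx)).sub tendsto_const_nhds
  exact tendsto_nhds_unique hlim1 hlim2
lemma hasDerivWithinAt_primitive_Icc {F : ℝ → ℝ} (hF : ContinuousOn F (Icc (0:ℝ) 1))
    {x : ℝ} (hx : x ∈ Icc (0:ℝ) 1) :
    HasDerivWithinAt (fun y => ∫ t in (0:ℝ)..y, F t) (F x) (Icc (0:ℝ) 1) x := by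
  have hFi : IntegrableOn F (Icc (0:ℝ) 1) volume := hF.integrableOn_compact isCompact_Icc
  have hmeasIcc : AEStronglyMeasurable F (volume.restrict (Icc (0:ℝ) 1)) :=
    hF.aestronglyMeasurable measurableSet_Icc
  have hii : IntervalIntegrable F volume 0 x := II_of hFi hx
  rcases eq_or_lt_of_le hx.1 with h0 | h0
  · -- x = 0
    have hmem : Icc (0:ℝ) 1 ∈ nhdsWithin (0:ℝ) (Ioi (0:ℝ)) := by
      refine Filter.mem_of_superset
        (inter_mem_nhdsWithin (Ioi (0:ℝ)) (isOpen_Iio.mem_nhds (by norm_num : (0:ℝ) < 1))) ?_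
      rintro y ⟨hy1, hy2⟩
      exact ⟨le_of_lt (mem_Ioi.1 hy1), le_of_lt (mem_Iio.1 hy2)⟩
    have hc : ContinuousWithinAt F (Ioi (0:ℝ)) 0 :=
      (hF 0 ⟨le_refl 0, zero_le_one⟩).mono_of_mem_nhdsWithin hmem
    have hii0 : IntervalIntegrable F volume 0 0 := IntervalIntegrable.refl
    have hd := intervalIntegral.integral_hasDerivWithinAt_right (a := (0:ℝ))
      (s := Ici (0:ℝ)) (t := Ioi (0:ℝ)) hii0 ⟨Icc 0 1, hmem, hmeasIcc⟩ hc
    rw [← h0]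
    exact hd.mono (fun y hy => hy.1)
  rcases eq_or_lt_of_le hx.2 with h1 | h1
  · -- x = 1
    have hmem : Icc (0:ℝ) 1 ∈ nhdsWithin (1:ℝ) (Iic (1:ℝ)) := by
      refine Filter.mem_of_superset
        (inter_mem_nhdsWithin (Iic (1:ℝ)) (isOpen_Ioi.mem_nhds (by norm_num : (0:ℝ) < 1))) ?_
      rintro y ⟨hy1, hy2⟩
      exact ⟨le_of_lt (mem_Ioi.1 hy2), mem_Iic.1 hy1⟩
    have hc : ContinuousWithinAt F (Iic (1:ℝ)) 1 :=
      (hF 1 ⟨zero_le_one, le_refl 1⟩).mono_of_mem_nhdsWithin hmem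
    have hii1 : IntervalIntegrable F volume 0 1 := II_of hFi ⟨zero_le_one, le_refl 1⟩
    have hd := intervalIntegral.integral_hasDerivWithinAt_right (a := (0:ℝ))
      (s := Iic (1:ℝ)) (t := Iic (1:ℝ)) hii1 ⟨Icc 0 1, hmem, hmeasIcc⟩ hc
    rw [h1]
    exact hd.mono (fun y hy => hy.2)
  · -- interior
    have hnhds : Icc (0:ℝ) 1 ∈ nhds x := Icc_mem_nhds h0 h1
    have hd := intervalIntegral.integral_hasDerivAt_right hii
      ⟨Icc 0 1, hnhds, hmeasIcc⟩ (hF.continuousAt hnhds)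
    exact hd.hasDerivWithinAt

lemma ae_eq_of_prim_eq {f g : ℝ → ℝ} (hf : IntegrableOn f (Icc (0:ℝ) 1) volume)
    (hg : IntegrableOn g (Icc (0:ℝ) 1) volume)
    (hprim : ∀ x ∈ Icc (0:ℝ) 1, (∫ u in (0:ℝ)..x, f u) = ∫ u in (0:ℝ)..x, g u) :
    f =ᵐ[mu01] g := by
  set w : ℝ → ℝ := (Icc (0:ℝ) 1).indicator (fun u => f u - g u) with hwdef
  have hwInt : Integrable w volume :=
    IntegrableOn.integrable_indicator (hf.sub hg) measurableSet_Icc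
  have hwprim : ∀ x : ℝ, (∫ u in (0:ℝ)..x, w u) = 0 := by
    have hIcc : ∀ x ∈ Icc (0:ℝ) 1, (∫ u in (0:ℝ)..x, w u) = 0 := by
      intro x hx
      have h1 : ∫ u in (0:ℝ)..x, w u = ∫ u in (0:ℝ)..x, (f u - g u) := by
        apply intervalIntegral.integral_congr
        intro y hy
        rw [uIcc_of_le hx.1] at hy
        exact Set.indicator_of_mem (show y ∈ Icc (0:ℝ) 1 from ⟨hy.1, le_trans hy.2 hx.2⟩) _
      rw [h1, intervalIntegral.integral_sub (II_of hf hx) (II_of hg hx), hprim x hx, sub_self]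
    intro x
    rcases le_or_gt x 1 with hx1 | hx1
    · rcases le_or_gt 0 x with hx0 | hx0
      · exact hIcc x ⟨hx0, hx1⟩
      · -- x < 0
        rw [intervalIntegral.integral_symm]
        rw [intervalIntegral.integral_of_le hx0.le, integral_Ioc_eq_integral_Ioo]
        rw [setIntegral_congr_fun measurableSet_Ioo
          (fun y hy => Set.indicator_of_notMem (fun hmem => absurd hmem.1 (not_le.2 hy.2)) _)]
        simp
    · -- 1 < x
      have h01 := hIcc 1 ⟨zero_le_one, le_refl 1⟩
      have hadd := intervalIntegral.integral_add_adjacent_intervals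
        (hwInt.intervalIntegrable (a := 0) (b := 1)) (hwInt.intervalIntegrable (a := 1) (b := x))
      have h1x : ∫ u in (1:ℝ)..x, w u = 0 := by
        rw [intervalIntegral.integral_of_le hx1.le]
        rw [setIntegral_congr_fun measurableSet_Ioc
          (fun y hy => Set.indicator_of_notMem (fun hmem => absurd hmem.2 (not_le.2 hy.1)) _)]
        simp
      rw [← hadd, h01, h1x, add_zero]
  -- Lebesgue differentiation
  have hz : ∀ᵐ x ∂(volume : Measure ℝ), w x = 0 := by
    have hLD := IsUnifLocDoublingMeasure.ae_tendsto_average (μ := (volume : Measure ℝ))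
      hwInt.locallyIntegrable 1
    filter_upwards [hLD] with x hx
    have hδ : Filter.Tendsto (fun j : ℕ => ((j:ℝ)+1)⁻¹) Filter.atTop (nhdsWithin 0 (Ioi 0)) := by
      apply tendsto_nhdsWithin_of_tendsto_nhds_of_eventually_within
      · simpa only [one_div] using (tendsto_one_div_add_atTop_nhds_zero_nat :
        Filter.Tendsto (fun n : ℕ => 1 / ((n : ℝ) + 1)) Filter.atTop (nhds 0))
      · exact Filter.Eventually.of_forall (fun j => mem_Ioi.2 (by positivity))
    have hmem : ∀ᶠ j : ℕ in Filter.atTop, x ∈ Metric.closedBall x (1 * ((j:ℝ)+1)⁻¹) := by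
      apply Filter.Eventually.of_forall
      intro j
      apply Metric.mem_closedBall_self
      positivity
    have htend := hx (fun _ => x) (fun j : ℕ => ((j:ℝ)+1)⁻¹) hδ hmem
    have hzero : ∀ j : ℕ, (⨍ y in Metric.closedBall x ((j:ℝ)+1)⁻¹, w y) = 0 := by
      intro j
      have hr : (0:ℝ) < ((j:ℝ)+1)⁻¹ := by positivity
      have hint0 : (∫ y in Metric.closedBall x ((j:ℝ)+1)⁻¹, w y) = 0 := by
        rw [Real.closedBall_eq_Icc, integral_Icc_eq_integral_Ioc,
          ← intervalIntegral.integral_of_le (by linarith : x - ((j:ℝ)+1)⁻¹ ≤ x + ((j:ℝ)+1)⁻¹),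
          ← intervalIntegral.integral_interval_sub_left
            (hwInt.intervalIntegrable (a := 0) (b := x + ((j:ℝ)+1)⁻¹))
            (hwInt.intervalIntegrable (a := 0) (b := x - ((j:ℝ)+1)⁻¹)),
          hwprim, hwprim, sub_zero]
      rw [setAverage_eq, hint0, smul_zero]
    have h0' : Filter.Tendsto (fun _ : ℕ => (0:ℝ)) Filter.atTop (nhds (w x)) := by
      simpa [hzero] using htend
    exact tendsto_nhds_unique h0' tendsto_const_nhds
  have h1 : ∀ᵐ x ∂mu01, w x = 0 := ae_restrict_of_ae hz
  have h2 : ∀ᵐ x ∂mu01, x ∈ Icc (0:ℝ) 1 := ae_restrict_mem measurableSet_Icc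
  filter_upwards [h1, h2] with x hx1 hx2
  have h3 : f x - g x = 0 := by
    rw [← Set.indicator_of_mem hx2 (fun u => f u - g u)]
    exact hx1
  linarith
lemma lp_integrableOn (q : MeasureTheory.Lp ℝ 2 mu01) :
    IntegrableOn (q : ℝ → ℝ) (Icc (0:ℝ) 1) volume :=
  (Lp.memLp q).integrable one_le_two

lemma Qcont (q : MeasureTheory.Lp ℝ 2 mu01) :
    ContinuousOn (fun y => ∫ v in (0:ℝ)..y, (q : ℝ → ℝ) v) (Icc (0:ℝ) 1) := by
  have h1 : IntegrableOn (q : ℝ → ℝ) (uIcc (0:ℝ) 1) volume := by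
    rw [uIcc_of_le zero_le_one]; exact lp_integrableOn q
  have := intervalIntegral.continuousOn_primitive_interval (a := (0:ℝ)) (b := 1)
    (μ := volume) (f := (q : ℝ → ℝ)) h1
  rwa [uIcc_of_le zero_le_one] at this

lemma phiMap_hasDeriv (q : MeasureTheory.Lp ℝ 2 mu01) {x : ℝ} (hx : x ∈ Icc (0:ℝ) 1) :
    HasDerivWithinAt (PhiMap q)
      (Real.exp (∫ v in (0:ℝ)..x, (q : ℝ → ℝ) v)) (Icc (0:ℝ) 1) x :=
  hasDerivWithinAt_primitive_Icc
    (Real.continuous_exp.comp_continuousOn (Qcont q)) hx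

lemma part1 (q : MeasureTheory.Lp ℝ 2 mu01) (hq : q ∈ Qset) : PhiMap q ∈ DiffSet := by
  have hqint := lp_integrableOn q
  have hQcont : ContinuousOn (fun y => ∫ v in (0:ℝ)..y, (q : ℝ → ℝ) v) (Icc (0:ℝ) 1) := Qcont q
  obtain ⟨Mb, hMb⟩ := isCompact_Icc.exists_bound_of_continuousOn hQcont
  refine ⟨fun x => PhiMap q x - x,
    fun x => Real.exp (∫ v in (0:ℝ)..x, (q : ℝ → ℝ) v) - 1,
    fun x => (q : ℝ → ℝ) x * Real.exp (∫ v in (0:ℝ)..x, (q : ℝ → ℝ) v), ?_⟩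
  constructor
  · intro x _; ring
  · intro x hx
    exact (phiMap_hasDeriv q hx).sub (hasDerivWithinAt_id x _)
  · exact (Real.continuous_exp.comp_continuousOn hQcont).sub continuousOn_const
  · simp [PhiMap]
  · have h2 := hq.2
    show PhiMap q 1 - 1 = 0
    rw [PhiMap]
    rw [h2]
    ring
  · simp
  · have h1 : (∫ v in (0:ℝ)..1, (q : ℝ → ℝ) v) = 0 := hq.1
    rw [h1]; simp
  · intro x _
    have := Real.exp_pos (∫ v in (0:ℝ)..x, (q : ℝ → ℝ) v)
    linarith
  · refine MemLp.of_le_mul (c := Real.exp Mb) (Lp.memLp q) ?_ ?_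
    · exact ((Lp.memLp q).aestronglyMeasurable).mul
        ((Real.continuous_exp.comp_continuousOn hQcont).aestronglyMeasurable measurableSet_Icc)
    · refine ae_restrict_of_forall_mem (μ := volume) measurableSet_Icc ?_
      intro y hy
      show ‖(q : ℝ → ℝ) y * Real.exp (∫ v in (0:ℝ)..y, (q : ℝ → ℝ) v)‖
        ≤ Real.exp Mb * ‖(q : ℝ → ℝ) y‖
      rw [norm_mul, mul_comm]
      apply mul_le_mul_of_nonneg_right _ (norm_nonneg _)
      rw [Real.norm_eq_abs, abs_of_pos (Real.exp_pos _)]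
      apply Real.exp_le_exp.2
      exact le_trans (le_abs_self _) (by simpa [Real.norm_eq_abs] using hMb y hy)
  · intro x hx
    have hkey := key_ftc hqint Real.exp Real.exp Real.continuous_exp
      (fun t => Real.hasDerivAt_exp t) hx
    rw [hkey, Real.exp_zero]
lemma part2 : Set.InjOn PhiMap Qset := by
  intro q1 _ q2 _ heq
  have hQ : ∀ x ∈ Icc (0:ℝ) 1,
      (∫ v in (0:ℝ)..x, (q1 : ℝ → ℝ) v) = ∫ v in (0:ℝ)..x, (q2 : ℝ → ℝ) v := by
    intro x hx
    have d1 := phiMap_hasDeriv q1 hx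
    have d2 := phiMap_hasDeriv q2 hx
    rw [heq] at d1
    exact Real.exp_injective ((uniqueDiffOn_Icc_zero_one x hx).eq_deriv _ d1 d2)
  exact Lp.ext (ae_eq_of_prim_eq (lp_integrableOn q1) (lp_integrableOn q2) hQ)

lemma wit_c {ψ f f' h : ℝ → ℝ} (wit : DiffWitness ψ f f' h) :
    ∃ c : ℝ, 0 < c ∧ c ≤ 1 ∧ ∀ u ∈ Icc (0:ℝ) 1, c ≤ 1 + f' u := by
  have hcont1 : ContinuousOn (fun u => 1 + f' u) (Icc (0:ℝ) 1) :=
    continuousOn_const.add wit.cont_deriv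
  obtain ⟨z, hz, hzmin⟩ := isCompact_Icc.exists_isMinOn
    (nonempty_Icc.2 zero_le_one) hcont1
  refine ⟨1 + f' z, wit.jac_pos z hz, ?_, fun u hu => hzmin hu⟩
  have := hzmin (show (0:ℝ) ∈ Icc (0:ℝ) 1 from ⟨le_refl 0, zero_le_one⟩)
  simpa [wit.f'_zero] using this

lemma wit_memlp {ψ f f' h : ℝ → ℝ} (wit : DiffWitness ψ f f' h) :
    MemLp (fun x => h x / (1 + f' x)) 2 mu01 := by
  obtain ⟨c, hc0, hc1, hcle⟩ := wit_c wit
  refine MemLp.of_le_mul (c := c⁻¹) wit.h_L2 ?_ ?_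
  · have hinv : AEStronglyMeasurable (fun x => (1 + f' x)⁻¹) mu01 :=
      ((continuousOn_const.add wit.cont_deriv).inv₀
        (fun x hx => ne_of_gt (wit.jac_pos x hx))).aestronglyMeasurable measurableSet_Icc
    simpa [div_eq_mul_inv, Pi.mul_def] using (wit.h_L2.aestronglyMeasurable).mul hinv
  · refine ae_restrict_of_forall_mem (μ := volume) measurableSet_Icc ?_
    intro y hy
    show ‖h y / (1 + f' y)‖ ≤ c⁻¹ * ‖h y‖
    rw [norm_div, Real.norm_eq_abs (1 + f' y), abs_of_pos (wit.jac_pos y hy),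
      div_eq_inv_mul]
    apply mul_le_mul_of_nonneg_right _ (norm_nonneg _)
    exact inv_anti₀ hc0 (hcle y hy)

lemma wit_prim {ψ f f' h : ℝ → ℝ} (wit : DiffWitness ψ f f' h) :
    ∀ x ∈ Icc (0:ℝ) 1,
      (∫ u in (0:ℝ)..x, h u / (1 + f' u)) = Real.log (1 + f' x) := by
  obtain ⟨c, hc0, hc1, hcle⟩ := wit_c wit
  set g : ℝ → ℝ := fun t => (max (1 + t) c)⁻¹ with hgdef
  have hgc : Continuous g := by
    apply Continuous.inv₀ ((continuous_const.add continuous_id).max continuous_const)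
    intro t
    exact ne_of_gt (lt_of_lt_of_le hc0 (le_max_right _ _))
  set G : ℝ → ℝ := fun t => ∫ s in (0:ℝ)..t, g s with hGdef
  have hG : ∀ t, HasDerivAt G (g t) t := fun t =>
    intervalIntegral.integral_hasDerivAt_right (hgc.intervalIntegrable _ _)
      (hgc.stronglyMeasurableAtFilter _ _) hgc.continuousAt
  have hhint : IntegrableOn h (Icc (0:ℝ) 1) volume := wit.h_L2.integrable one_le_two
  have hGval : ∀ y : ℝ, c - 1 ≤ y → G y = Real.log (1 + y) := by
    intro y hy
    have h1y : (0:ℝ) < 1 + y := by linarith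
    have hcong : ∀ s ∈ uIcc (0:ℝ) y, g s = (1 + s)⁻¹ := by
      intro s hs
      have hs1 : c - 1 ≤ s := by
        rcases le_total (0:ℝ) y with hy0 | hy0
        · rw [uIcc_of_le hy0] at hs; linarith [hs.1]
        · rw [uIcc_of_ge hy0] at hs; linarith [hs.1]
      show (max (1 + s) c)⁻¹ = (1 + s)⁻¹
      rw [max_eq_left (by linarith)]
    calc G y = ∫ s in (0:ℝ)..y, (1 + s)⁻¹ := intervalIntegral.integral_congr hcong
      _ = ∫ t in (1:ℝ)..(1+y), t⁻¹ := by
          have := intervalIntegral.integral_comp_add_left (a := (0:ℝ)) (b := y)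
            (fun t => t⁻¹) 1
          simpa using this
      _ = Real.log (1 + y) := by
          rw [integral_inv (Set.notMem_uIcc_of_lt one_pos h1y), div_one]
  intro x hx
  have hkey := key_ftc hhint g G hgc hG hx
  have hLHS : (∫ u in (0:ℝ)..x, h u / (1 + f' u))
      = ∫ u in (0:ℝ)..x, h u * g (∫ v in (0:ℝ)..u, h v) := by
    apply intervalIntegral.integral_congr
    intro u hu
    rw [uIcc_of_le hx.1] at hu
    have hu' : u ∈ Icc (0:ℝ) 1 := ⟨hu.1, le_trans hu.2 hx.2⟩
    show h u / (1 + f' u) = h u * g (∫ v in (0:ℝ)..u, h v)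
    rw [← wit.f'_int u hu']
    show h u / (1 + f' u) = h u * (max (1 + f' u) c)⁻¹
    rw [max_eq_left (hcle u hu'), div_eq_mul_inv]
  have hx' : (∫ v in (0:ℝ)..x, h v) = f' x := (wit.f'_int x hx).symm
  rw [hLHS, hkey, hx', hGval (f' x) (by linarith [hcle x hx])]
  have hG0 : G 0 = 0 := intervalIntegral.integral_same
  rw [hG0, sub_zero]
lemma part3 {ψ f f' h : ℝ → ℝ} (wit : DiffWitness ψ f f' h) :
    ∃ q ∈ Qset, Set.EqOn (PhiMap q) ψ (Icc (0:ℝ) 1) := by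
  have hmem := wit_memlp wit
  set q0 : ℝ → ℝ := fun x => h x / (1 + f' x) with hq0def
  set q : MeasureTheory.Lp ℝ 2 mu01 := hmem.toLp q0 with hqdef
  have hcoe : (q : ℝ → ℝ) =ᵐ[mu01] q0 := hmem.coeFn_toLp
  have hprim_eq : ∀ y ∈ Icc (0:ℝ) 1,
      (∫ v in (0:ℝ)..y, (q : ℝ → ℝ) v) = ∫ v in (0:ℝ)..y, q0 v := by
    intro y hy
    rw [intervalIntegral.integral_of_le hy.1, intervalIntegral.integral_of_le hy.1]
    have h2 : Ioc (0:ℝ) y ⊆ Icc (0:ℝ) 1 := fun z hz => ⟨hz.1.le, le_trans hz.2 hy.2⟩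
    have h3 : ∀ᵐ z ∂(volume.restrict (Ioc (0:ℝ) y)), (q : ℝ → ℝ) z = q0 z :=
      ae_restrict_of_ae_restrict_of_subset h2 hcoe
    exact integral_congr_ae h3
  have hQ0 : ∀ y ∈ Icc (0:ℝ) 1, (∫ v in (0:ℝ)..y, (q : ℝ → ℝ) v) = Real.log (1 + f' y) :=
    fun y hy => (hprim_eq y hy).trans (wit_prim wit y hy)
  have hexp : ∀ y ∈ Icc (0:ℝ) 1,
      Real.exp (∫ v in (0:ℝ)..y, (q : ℝ → ℝ) v) = 1 + f' y := fun y hy => by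
    rw [hQ0 y hy, Real.exp_log (wit.jac_pos y hy)]
  have hfcont : ContinuousOn f (Icc (0:ℝ) 1) :=
    fun y hy => (wit.deriv_f y hy).continuousWithinAt
  have hintf' : ∀ x ∈ Icc (0:ℝ) 1, (∫ u in (0:ℝ)..x, f' u) = f x - f 0 := by
    intro x hx
    apply intervalIntegral.integral_eq_sub_of_hasDeriv_right_of_le hx.1
    · exact hfcont.mono (Icc_subset_Icc le_rfl hx.2)
    · intro y hy
      have hy' : y ∈ Ioo (0:ℝ) 1 := ⟨hy.1, lt_of_lt_of_le hy.2 hx.2⟩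
      exact ((wit.deriv_f y (Ioo_subset_Icc_self hy')).hasDerivAt
        (Icc_mem_nhds hy'.1 hy'.2)).hasDerivWithinAt
    · exact II_of (wit.cont_deriv.integrableOn_compact isCompact_Icc) hx
  have haux : ∀ x ∈ Icc (0:ℝ) 1, (∫ y in (0:ℝ)..x, (1 + f' y)) = x + f x := by
    intro x hx
    rw [intervalIntegral.integral_add intervalIntegrable_const
      (II_of (wit.cont_deriv.integrableOn_compact isCompact_Icc) hx), hintf' x hx,
      intervalIntegral.integral_const]
    simp [wit.f_zero]
  have hPhi : Set.EqOn (PhiMap q) ψ (Icc (0:ℝ) 1) := by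
    intro x hx
    have h1 : PhiMap q x = ∫ y in (0:ℝ)..x, (1 + f' y) := by
      apply intervalIntegral.integral_congr
      intro y hy
      rw [uIcc_of_le hx.1] at hy
      exact hexp y ⟨hy.1, le_trans hy.2 hx.2⟩
    show PhiMap q x = ψ x
    rw [h1, haux x hx, ← wit.eq_id_add x hx]
  refine ⟨q, ⟨?_, ?_⟩, hPhi⟩
  · have h5 := hQ0 1 ⟨zero_le_one, le_refl 1⟩
    rw [wit.f'_one] at h5
    simpa using h5
  · have h1 : (∫ x in (0:ℝ)..1, Real.exp (∫ u in (0:ℝ)..x, (q : ℝ → ℝ) u))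
        = ∫ x in (0:ℝ)..1, (1 + f' x) := by
      apply intervalIntegral.integral_congr
      intro y hy
      rw [uIcc_of_le zero_le_one] at hy
      exact hexp y hy
    rw [h1, haux 1 ⟨zero_le_one, le_refl 1⟩, wit.f_one, add_zero]

lemma part4 (q : MeasureTheory.Lp ℝ 2 mu01) {ψ f f' h : ℝ → ℝ} (wit : DiffWitness ψ f f' h)
    (heq : Set.EqOn (PhiMap q) ψ (Icc (0:ℝ) 1)) :
    (q : ℝ → ℝ) =ᵐ[mu01] fun x => h x / (1 + f' x) := by
  have hexp : ∀ x ∈ Icc (0:ℝ) 1,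
      Real.exp (∫ v in (0:ℝ)..x, (q : ℝ → ℝ) v) = 1 + f' x := by
    intro x hx
    have d1 : HasDerivWithinAt ψ (Real.exp (∫ v in (0:ℝ)..x, (q : ℝ → ℝ) v))
        (Icc (0:ℝ) 1) x :=
      (phiMap_hasDeriv q hx).congr (fun y hy => (heq hy).symm) (heq hx).symm
    have d2 : HasDerivWithinAt ψ (1 + f' x) (Icc (0:ℝ) 1) x := by
      apply HasDerivWithinAt.congr ((hasDerivWithinAt_id x _).add (wit.deriv_f x hx))
      · intro y hy; exact wit.eq_id_add y hy
      · exact wit.eq_id_add x hx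
    exact (uniqueDiffOn_Icc_zero_one x hx).eq_deriv _ d1 d2
  have hprim : ∀ x ∈ Icc (0:ℝ) 1,
      (∫ v in (0:ℝ)..x, (q : ℝ → ℝ) v) = ∫ v in (0:ℝ)..x, h v / (1 + f' v) := by
    intro x hx
    rw [wit_prim wit x hx, ← hexp x hx, Real.log_exp]
  exact ae_eq_of_prim_eq (lp_integrableOn q) ((wit_memlp wit).integrable one_le_two) hprim


/-- the map `q ↦ φ(q)` is a bijection from
`{q ∈ L²([0,1]) : ∫₀¹ q = 0, ∫₀¹ exp(∫₀ˣ q) dx = 1}` onto `Diff₀²([0,1])`, with inverse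
`ψ ↦ (log ψ')' = ψ''/ψ'`. -/
theorem stmt_6 :
    (∀ q ∈ Qset, PhiMap q ∈ DiffSet) ∧
    Set.InjOn PhiMap Qset ∧
    (∀ ψ ∈ DiffSet, ∃ q ∈ Qset, Set.EqOn (PhiMap q) ψ (Icc (0:ℝ) 1)) ∧
    -- the inverse is `ψ ↦ (log ψ')' = ψ''/ψ'`: if `PhiMap q = ψ` on `[0,1]` then
    -- `q = h / (1 + f') = ψ''/ψ'` almost everywhere on `[0,1]`.
    (∀ q ∈ Qset, ∀ ψ f f' h : ℝ → ℝ, DiffWitness ψ f f' h →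
      Set.EqOn (PhiMap q) ψ (Icc (0:ℝ) 1) →
      (q : ℝ → ℝ) =ᵐ[mu01] fun x => h x / (1 + f' x)) := by
  refine ⟨fun q hq => part1 q hq, part2, ?_, ?_⟩
  · rintro ψ ⟨f, f', h, wit⟩
    exact part3 wit
  · intro q _ ψ f f' h wit heq
    exact part4 q wit heq
end

section
/- Let q ∈ L²([0,1]) satisfy ∫₀¹ q(x) dx = 0 and ∫₀¹ η(q)(x) dx = 1, and write η = η(q), φ = φ(q). Then: (i) ∫₀¹ η φ dx = 1/2 and ∫₀¹ η φ² dx = 1/3, so that the Gram matrix of the pair (η, φη) for the inner product ⟨f,g⟩_{1/η} = ∫₀¹ f g / η dx is the Hilbert matrix H₂ = [[1, 1/2], [1/2, 1/3]]; (ii) the map π_q defined by π_q(f) = f − (4A − 6B)·η − (−6A + 12B)·φη, where A = ∫₀¹ f dx and B = ∫₀¹ f φ dx (equivalently π_q(f) = f − [η, φη] H₂⁻¹ [⟨f,η⟩_{1/η}; ⟨f,φη⟩_{1/η}], noting ⟨f,η⟩_{1/η} = A and ⟨f,φη⟩_{1/η} = B), is the orthogonal projection of L²([0,1]) onto the closed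 subspace T_q = { X ∈ L²([0,1]) : ∫₀¹ X dx = 0 and ∫₀¹ X φ dx = 0 } for the inner product ⟨·,·⟩_{1/η}: that is, π_q(f) ∈ T_q for every f, and ⟨f − π_q(f), X⟩_{1/η} = 0 for every f ∈ L²([0,1]) and every X ∈ T_q. -/
open Set MeasureTheory intervalIntegral Topology

/-- `η(q)(x) = exp(∫₀ˣ q(u) du)`. -/
noncomputable def etaFun (q : ℝ → ℝ) (x : ℝ) : ℝ := Real.exp (∫ u in (0:ℝ)..x, q u)

/-- `φ(q)(x) = ∫₀ˣ η(q)(y) dy`. -/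
noncomputable def phiFun (q : ℝ → ℝ) (x : ℝ) : ℝ := ∫ y in (0:ℝ)..x, etaFun q y

/-- The projection `π_q(f) = f − (4A − 6B)·η − (−6A + 12B)·φη` with `A = ∫₀¹ f` and
`B = ∫₀¹ f φ`, i.e. `π_q(f) = f − [η, φη] H₂⁻¹ [⟨f,η⟩_{1/η}; ⟨f,φη⟩_{1/η}]`. -/
noncomputable def projQ (q f : ℝ → ℝ) (x : ℝ) : ℝ :=
  f x - (4 * (∫ y in (0:ℝ)..1, f y) - 6 * (∫ y in (0:ℝ)..1, f y * phiFun q y)) * etaFun q x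
      - (-6 * (∫ y in (0:ℝ)..1, f y) + 12 * (∫ y in (0:ℝ)..1, f y * phiFun q y)) *
          (phiFun q x * etaFun q x)

instance inst_s7 : IsFiniteMeasure mu01 := ⟨by
  rw [mu01, Measure.restrict_apply_univ, Real.volume_Icc]; norm_num⟩

lemma memL2_intInt {g : ℝ → ℝ} (hg : MeasureTheory.MemLp g 2 mu01) :
    IntervalIntegrable g MeasureTheory.volume 0 1 := by
  have h := hg.integrable one_le_two
  rw [mu01] at h
  rw [intervalIntegrable_iff_integrableOn_Ioc_of_le zero_le_one]
  exact MeasureTheory.IntegrableOn.mono_set h Ioc_subset_Icc_self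

/-- for `q ∈ L²([0,1])` with `∫₀¹ q = 0` and `∫₀¹ η(q) = 1`:
(i) `∫₀¹ η φ = 1/2` and `∫₀¹ η φ² = 1/3` (so the Gram matrix of `(η, φη)` for `⟨·,·⟩_{1/η}`
is the Hilbert matrix `H₂`); (ii) `π_q` is the `⟨·,·⟩_{1/η}`-orthogonal projection of
`L²([0,1])` onto `T_q = {X : ∫₀¹ X = 0, ∫₀¹ X φ = 0}`. -/
theorem stmt_7 (q : ℝ → ℝ) (hq : MeasureTheory.MemLp q 2 mu01)
    (h1 : (∫ x in (0:ℝ)..1, q x) = 0)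
    (h2 : (∫ x in (0:ℝ)..1, etaFun q x) = 1) :
    -- (i) the Gram matrix of (η, φη) for ⟨·,·⟩_{1/η} is H₂ = [[1,1/2],[1/2,1/3]]
    ((∫ x in (0:ℝ)..1, etaFun q x * phiFun q x) = 1 / 2 ∧
     (∫ x in (0:ℝ)..1, etaFun q x * (phiFun q x) ^ 2) = 1 / 3) ∧
    -- (ii) π_q is the orthogonal projection onto T_q for ⟨·,·⟩_{1/η}
    (∀ f : ℝ → ℝ, MeasureTheory.MemLp f 2 mu01 →
      ((∫ x in (0:ℝ)..1, projQ q f x) = 0 ∧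
       (∫ x in (0:ℝ)..1, projQ q f x * phiFun q x) = 0) ∧
      (∀ X : ℝ → ℝ, MeasureTheory.MemLp X 2 mu01 →
        (∫ x in (0:ℝ)..1, X x) = 0 → (∫ x in (0:ℝ)..1, X x * phiFun q x) = 0 →
        (∫ x in (0:ℝ)..1, (f x - projQ q f x) * X x / etaFun q x) = 0)) := by
  have hqint := memL2_intInt hq
  have hFcont : ContinuousOn (fun x => ∫ u in (0:ℝ)..x, q u) (Icc 0 1) := by
    have := intervalIntegral.continuousOn_primitive_interval' hqint left_mem_uIcc
    rwa [uIcc_of_le zero_le_one] at this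
  have hEcont : ContinuousOn (etaFun q) (Icc 0 1) :=
    Real.continuous_exp.comp_continuousOn hFcont
  have hEint : IntervalIntegrable (etaFun q) volume 0 1 := by
    apply ContinuousOn.intervalIntegrable
    rwa [uIcc_of_le zero_le_one]
  have hPcont : ContinuousOn (phiFun q) (Icc 0 1) := by
    have := intervalIntegral.continuousOn_primitive_interval' hEint left_mem_uIcc
    rwa [uIcc_of_le zero_le_one] at this
  have hPderiv : ∀ x ∈ Ioo (0:ℝ) 1, HasDerivAt (phiFun q) (etaFun q x) x := by
    intro x hx
    have hcx : ContinuousAt (etaFun q) x := hEcont.continuousAt (Icc_mem_nhds hx.1 hx.2)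
    have hmeas : StronglyMeasurableAtFilter (etaFun q) (𝓝 x) volume :=
      ⟨Ioo 0 1, Ioo_mem_nhds hx.1 hx.2,
        (hEcont.mono Ioo_subset_Icc_self).aestronglyMeasurable measurableSet_Ioo⟩
    exact intervalIntegral.integral_hasDerivAt_right
      (hEint.mono_set (uIcc_subset_uIcc left_mem_uIcc
        (by rw [uIcc_of_le zero_le_one]; exact ⟨hx.1.le, hx.2.le⟩))) hmeas hcx
  have hEPint : IntervalIntegrable (fun x => etaFun q x * phiFun q x) volume 0 1 := by
    apply ContinuousOn.intervalIntegrable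
    rw [uIcc_of_le zero_le_one]; exact hEcont.mul hPcont
  have hPEint : IntervalIntegrable (fun x => phiFun q x * etaFun q x) volume 0 1 := by
    apply ContinuousOn.intervalIntegrable
    rw [uIcc_of_le zero_le_one]; exact hPcont.mul hEcont
  have hEP2int : IntervalIntegrable (fun x => etaFun q x * phiFun q x ^ 2) volume 0 1 := by
    apply ContinuousOn.intervalIntegrable
    rw [uIcc_of_le zero_le_one]; exact hEcont.mul (hPcont.pow 2)
  have hphi0 : phiFun q 0 = 0 := intervalIntegral.integral_same
  have hphi1 : phiFun q 1 = 1 := h2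
  have hG1 : (∫ x in (0:ℝ)..1, etaFun q x * phiFun q x) = 1 / 2 := by
    have h := intervalIntegral.integral_eq_sub_of_hasDeriv_right_of_le zero_le_one
      (f := fun x => phiFun q x ^ 2 / 2) (f' := fun x => etaFun q x * phiFun q x)
      ((hPcont.pow 2).div_const 2)
      (fun x hx => by
        have h' := ((hPderiv x hx).pow 2).div_const 2
        convert h'.hasDerivWithinAt using 1
        norm_num; ring) hEPint
    rw [h]; simp [hphi0, hphi1]
  have hG2 : (∫ x in (0:ℝ)..1, etaFun q x * phiFun q x ^ 2) = 1 / 3 := by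
    have h := intervalIntegral.integral_eq_sub_of_hasDeriv_right_of_le zero_le_one
      (f := fun x => phiFun q x ^ 3 / 3) (f' := fun x => etaFun q x * phiFun q x ^ 2)
      ((hPcont.pow 3).div_const 3)
      (fun x hx => by
        have h' := ((hPderiv x hx).pow 3).div_const 3
        convert h'.hasDerivWithinAt using 1
        norm_num; ring) hEP2int
    rw [h]; simp [hphi0, hphi1]
  have hPE : (∫ x in (0:ℝ)..1, phiFun q x * etaFun q x) = 1 / 2 := by
    rw [← hG1]; congr 1; ext x; ring
  have hmul : ∀ g : ℝ → ℝ, MeasureTheory.MemLp g 2 mu01 →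
      IntervalIntegrable (fun x => g x * phiFun q x) volume 0 1 := by
    intro g hg
    obtain ⟨C, hC⟩ := isCompact_Icc.exists_bound_of_continuousOn hPcont
    have hint : Integrable (fun x => phiFun q x * g x) mu01 := by
      refine Integrable.bdd_mul (c := C) (hg.integrable one_le_two) ?_ ?_
      · rw [mu01]; exact hPcont.aestronglyMeasurable measurableSet_Icc
      · rw [mu01]; exact (ae_restrict_iff' measurableSet_Icc).2 (.of_forall hC)
    have hint2 : Integrable (fun x => g x * phiFun q x) mu01 :=
      hint.congr (.of_forall fun x => mul_comm _ _)
    rw [mu01] at hint2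
    rw [intervalIntegrable_iff_integrableOn_Ioc_of_le zero_le_one]
    exact MeasureTheory.IntegrableOn.mono_set hint2 Ioc_subset_Icc_self
  refine ⟨⟨hG1, hG2⟩, ?_⟩
  intro f hf
  have hfint := memL2_intInt hf
  have hfPint := hmul f hf
  constructor
  · constructor
    · have hsplit : (∫ x in (0:ℝ)..1, projQ q f x)
          = (∫ x in (0:ℝ)..1, f x)
            - (4 * (∫ y in (0:ℝ)..1, f y) - 6 * (∫ y in (0:ℝ)..1, f y * phiFun q y)) *
                (∫ x in (0:ℝ)..1, etaFun q x)
            - (-6 * (∫ y in (0:ℝ)..1, f y) + 12 * (∫ y in (0:ℝ)..1, f y * phiFun q y)) *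
                (∫ x in (0:ℝ)..1, phiFun q x * etaFun q x) := by
        unfold projQ
        rw [intervalIntegral.integral_sub (hfint.sub (hEint.const_mul _))
              (hPEint.const_mul _),
            intervalIntegral.integral_sub hfint (hEint.const_mul _),
            intervalIntegral.integral_const_mul, intervalIntegral.integral_const_mul]
      rw [hsplit, h2, hPE]; ring
    · have hcongr : EqOn (fun x => projQ q f x * phiFun q x)
          (fun x => f x * phiFun q x
            - (4 * (∫ y in (0:ℝ)..1, f y) - 6 * (∫ y in (0:ℝ)..1, f y * phiFun q y)) *
                (etaFun q x * phiFun q x)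
            - (-6 * (∫ y in (0:ℝ)..1, f y) + 12 * (∫ y in (0:ℝ)..1, f y * phiFun q y)) *
                (etaFun q x * phiFun q x ^ 2)) (uIcc 0 1) := by
        intro x _
        simp only [projQ]; ring
      rw [intervalIntegral.integral_congr hcongr,
          intervalIntegral.integral_sub (hfPint.sub (hEPint.const_mul _))
            (hEP2int.const_mul _),
          intervalIntegral.integral_sub hfPint (hEPint.const_mul _),
          intervalIntegral.integral_const_mul, intervalIntegral.integral_const_mul,
          hG1, hG2]
      ring
  · intro X hX hX1 hX2
    have hXint := memL2_intInt hX
    have hXPint := hmul X hX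
    have hcongr : EqOn (fun x => (f x - projQ q f x) * X x / etaFun q x)
        (fun x => (4 * (∫ y in (0:ℝ)..1, f y) - 6 * (∫ y in (0:ℝ)..1, f y * phiFun q y)) * X x
          + (-6 * (∫ y in (0:ℝ)..1, f y) + 12 * (∫ y in (0:ℝ)..1, f y * phiFun q y)) *
              (X x * phiFun q x)) (uIcc 0 1) := by
      intro x _
      have hne : etaFun q x ≠ 0 := Real.exp_ne_zero _
      simp only [projQ]
      field_simp
      ring
    rw [intervalIntegral.integral_congr hcongr,
        intervalIntegral.integral_add (hXint.const_mul _) (hXPint.const_mul _),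
        intervalIntegral.integral_const_mul, intervalIntegral.integral_const_mul, hX1, hX2]
    ring
end

section
/- Let μ : D → [0,∞) be continuous and differentiable in the t-variable with ∂ₜμ continuous on D, and let ν : D → [0,∞) be continuous. Assume the pointwise inequality (∂ₜμ(t,x))² ≤ 4 ν(t,x) μ(t,x) for all (t,x) ∈ D. Then for every nonnegative function f : D → ℝ that is continuous, differentiable in t with ∂ₜf continuous, and satisfies f(0,x) = f(1,x) = 0 for all x ∈ [0,1], one has (∫_D μ ∂ₜf dt dx)² ≤ 4 (∫_D ν f dt dx)(∫_D μ f dt dx). -/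
open Set MeasureTheory

/-- The square `D = [0,1] × [0,1]` (time × space). -/
def Dsq : Set (ℝ × ℝ) := Icc (0:ℝ) 1 ×ˢ Icc (0:ℝ) 1

/-- if `μ, ν ≥ 0` are continuous on `D`, `μ` is differentiable in `t` with
continuous `∂ₜμ`, and `(∂ₜμ)² ≤ 4νμ` pointwise on `D`, then for every nonnegative test
function `f` (continuous, `C¹` in `t`, vanishing at `t = 0` and `t = 1`) one has
`(∫_D μ ∂ₜf)² ≤ 4 (∫_D ν f)(∫_D μ f)`. -/
theorem stmt_11 (μ ν dtμ : ℝ × ℝ → ℝ)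
    (hμc : ContinuousOn μ Dsq) (hνc : ContinuousOn ν Dsq) (hdtμc : ContinuousOn dtμ Dsq)
    (hμ0 : ∀ z ∈ Dsq, 0 ≤ μ z) (hν0 : ∀ z ∈ Dsq, 0 ≤ ν z)
    (hμdiff : ∀ z ∈ Dsq, HasDerivWithinAt (fun t => μ (t, z.2)) (dtμ z) (Icc (0:ℝ) 1) z.1)
    (hpoint : ∀ z ∈ Dsq, (dtμ z) ^ 2 ≤ 4 * ν z * μ z) :
    ∀ f dtf : ℝ × ℝ → ℝ,
      ContinuousOn f Dsq → ContinuousOn dtf Dsq →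
      (∀ z ∈ Dsq, 0 ≤ f z) →
      (∀ z ∈ Dsq, HasDerivWithinAt (fun t => f (t, z.2)) (dtf z) (Icc (0:ℝ) 1) z.1) →
      (∀ x ∈ Icc (0:ℝ) 1, f (0, x) = 0) → (∀ x ∈ Icc (0:ℝ) 1, f (1, x) = 0) →
      (∫ z in Dsq, μ z * dtf z) ^ 2 ≤
        4 * (∫ z in Dsq, ν z * f z) * (∫ z in Dsq, μ z * f z) := by
  intro f dtf hfc hdtfc hf0 hfdiff hf_t0 hf_t1
  have hDm : MeasurableSet Dsq := (measurableSet_Icc).prod measurableSet_Icc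
  have hDcomp : IsCompact Dsq := isCompact_Icc.prod isCompact_Icc
  -- slice continuity helper
  have hslice : ∀ (g : ℝ × ℝ → ℝ), ContinuousOn g Dsq → ∀ x ∈ Icc (0:ℝ) 1,
      ContinuousOn (fun t => g (t, x)) (Icc (0:ℝ) 1) := by
    intro g hg x hx
    exact hg.comp (Continuous.continuousOn (continuous_id.prodMk continuous_const))
      (fun t ht => Set.mk_mem_prod ht hx)
  -- Step A: integration by parts
  have hFc : ContinuousOn (fun z => μ z * dtf z + dtμ z * f z) Dsq :=
    (hμc.mul hdtfc).add (hdtμc.mul hfc)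
  have hFint : IntegrableOn (fun z => μ z * dtf z + dtμ z * f z) Dsq :=
    hFc.integrableOn_compact hDcomp
  have hrestrict : (volume : Measure (ℝ × ℝ)).restrict Dsq
      = ((volume : Measure ℝ).restrict (Icc 0 1)).prod ((volume : Measure ℝ).restrict (Icc 0 1)) := by
    rw [Measure.volume_eq_prod, Measure.prod_restrict]; rfl
  have hsum : (∫ z in Dsq, (μ z * dtf z + dtμ z * f z)) = 0 := by
    have hint' : Integrable (fun z => μ z * dtf z + dtμ z * f z)
        (((volume : Measure ℝ).restrict (Icc 0 1)).prod ((volume : Measure ℝ).restrict (Icc 0 1))) := by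
      rw [← hrestrict]; exact hFint
    calc (∫ z in Dsq, (μ z * dtf z + dtμ z * f z))
        = ∫ x in Icc (0:ℝ) 1, ∫ t in Icc (0:ℝ) 1,
            (μ (t, x) * dtf (t, x) + dtμ (t, x) * f (t, x)) := by
          rw [hrestrict]; exact MeasureTheory.integral_prod_symm _ hint'
      _ = 0 := by
          apply setIntegral_eq_zero_of_forall_eq_zero
          intro x hx
          have hmem : ∀ t ∈ Icc (0:ℝ) 1, ((t, x) : ℝ × ℝ) ∈ Dsq :=
            fun t ht => Set.mk_mem_prod ht hx
          have hPc : ContinuousOn (fun t => μ (t, x) * f (t, x)) (Icc (0:ℝ) 1) :=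
            (hslice μ hμc x hx).mul (hslice f hfc x hx)
          have hderiv : ∀ t ∈ Ioo (0:ℝ) 1,
              HasDerivWithinAt (fun t => μ (t, x) * f (t, x))
                (μ (t, x) * dtf (t, x) + dtμ (t, x) * f (t, x)) (Ioi t) t := by
            intro t ht
            have hzz := (hμdiff (t, x) (hmem t (Ioo_subset_Icc_self ht))).mul
              (hfdiff (t, x) (hmem t (Ioo_subset_Icc_self ht)))
            have hnhds : Icc (0:ℝ) 1 ∈ nhds t := Icc_mem_nhds ht.1 ht.2
            have := (hzz.hasDerivAt hnhds).hasDerivWithinAt (s := Ioi t)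
            exact this.congr_deriv (by ring)
          have hgc : ContinuousOn (fun t => μ (t, x) * dtf (t, x) + dtμ (t, x) * f (t, x))
              (Icc (0:ℝ) 1) :=
            ((hslice μ hμc x hx).mul (hslice dtf hdtfc x hx)).add
              ((hslice dtμ hdtμc x hx).mul (hslice f hfc x hx))
          have hii : IntervalIntegrable
              (fun t => μ (t, x) * dtf (t, x) + dtμ (t, x) * f (t, x)) volume 0 1 := by
            apply ContinuousOn.intervalIntegrable
            rwa [uIcc_of_le (by norm_num : (0:ℝ) ≤ 1)]
          have hftc := intervalIntegral.integral_eq_sub_of_hasDeriv_right_of_le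
            (by norm_num : (0:ℝ) ≤ 1) hPc hderiv hii
          rw [MeasureTheory.integral_Icc_eq_integral_Ioc,
            ← intervalIntegral.integral_of_le (by norm_num : (0:ℝ) ≤ 1), hftc,
            hf_t0 x hx, hf_t1 x hx]
          ring
  have hint1 : IntegrableOn (fun z => μ z * dtf z) Dsq :=
    (hμc.mul hdtfc).integrableOn_compact hDcomp
  have hint2 : IntegrableOn (fun z => dtμ z * f z) Dsq :=
    (hdtμc.mul hfc).integrableOn_compact hDcomp
  have hIBP : (∫ z in Dsq, μ z * dtf z) = -(∫ z in Dsq, dtμ z * f z) := by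
    have := MeasureTheory.integral_add hint1 hint2
    rw [hsum] at this
    linarith [this]
  -- Step B: Cauchy-Schwarz
  set g : ℝ × ℝ → ℝ := fun z => Real.sqrt (ν z * f z) with hg_def
  set h : ℝ × ℝ → ℝ := fun z => Real.sqrt (μ z * f z) with hh_def
  have hgc : ContinuousOn g Dsq := Real.continuous_sqrt.comp_continuousOn (hνc.mul hfc)
  have hhc : ContinuousOn h Dsq := Real.continuous_sqrt.comp_continuousOn (hμc.mul hfc)
  have hghint : IntegrableOn (fun z => g z * h z) Dsq :=
    (hgc.mul hhc).integrableOn_compact hDcomp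
  have habsint : IntegrableOn (fun z => |dtμ z * f z|) Dsq := hint2.abs
  -- pointwise bound
  have hpw : ∀ z ∈ Dsq, |dtμ z * f z| ≤ 2 * (g z * h z) := by
    intro z hz
    have hf0z := hf0 z hz
    have hν0z := hν0 z hz
    have hμ0z := hμ0 z hz
    have h1 : |dtμ z| ≤ 2 * Real.sqrt (ν z * μ z) := by
      have : |dtμ z| = Real.sqrt ((dtμ z) ^ 2) := (Real.sqrt_sq_eq_abs _).symm
      rw [this]
      calc Real.sqrt ((dtμ z) ^ 2) ≤ Real.sqrt (4 * (ν z * μ z)) := by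
            apply Real.sqrt_le_sqrt; linarith [hpoint z hz]
        _ = Real.sqrt 4 * Real.sqrt (ν z * μ z) := Real.sqrt_mul (by norm_num) _
        _ = 2 * Real.sqrt (ν z * μ z) := by
            rw [show (4:ℝ) = 2 ^ 2 by norm_num, Real.sqrt_sq (by norm_num : (0:ℝ) ≤ 2)]
    have h2 : g z * h z = Real.sqrt (ν z * μ z) * f z := by
      rw [hg_def, hh_def]
      rw [← Real.sqrt_mul (by positivity)]
      rw [show ν z * f z * (μ z * f z) = (ν z * μ z) * f z ^ 2 by ring]
      rw [Real.sqrt_mul (by positivity), Real.sqrt_sq hf0z]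
    rw [abs_mul, abs_of_nonneg hf0z, h2]
    calc |dtμ z| * f z ≤ (2 * Real.sqrt (ν z * μ z)) * f z :=
          mul_le_mul_of_nonneg_right h1 hf0z
      _ = 2 * (Real.sqrt (ν z * μ z) * f z) := by ring
  -- Hölder with p = q = 2
  have hconj : Real.HolderConjugate 2 2 := Real.HolderConjugate.two_two
  have hgmeas : AEStronglyMeasurable g ((volume : Measure (ℝ × ℝ)).restrict Dsq) :=
    hgc.aestronglyMeasurable hDm
  have hhmeas : AEStronglyMeasurable h ((volume : Measure (ℝ × ℝ)).restrict Dsq) :=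
    hhc.aestronglyMeasurable hDm
  have hgm : MemLp g 2 ((volume : Measure (ℝ × ℝ)).restrict Dsq) :=
    (memLp_two_iff_integrable_sq hgmeas).mpr ((hgc.pow 2).integrableOn_compact hDcomp)
  have hhm : MemLp h 2 ((volume : Measure (ℝ × ℝ)).restrict Dsq) :=
    (memLp_two_iff_integrable_sq hhmeas).mpr ((hhc.pow 2).integrableOn_compact hDcomp)
  have hofr : ENNReal.ofReal (2:ℝ) = (2 : ENNReal) := by
    rw [ENNReal.ofReal_ofNat]
  have hgnn : 0 ≤ᵐ[(volume : Measure (ℝ × ℝ)).restrict Dsq] g :=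
    ae_of_all _ (fun z => Real.sqrt_nonneg _)
  have hhnn : 0 ≤ᵐ[(volume : Measure (ℝ × ℝ)).restrict Dsq] h :=
    ae_of_all _ (fun z => Real.sqrt_nonneg _)
  have hHolder := MeasureTheory.integral_mul_le_Lp_mul_Lq_of_nonneg hconj
    hgnn hhnn (hofr ▸ hgm) (hofr ▸ hhm)
  -- identify the squared integrals
  set A : ℝ := ∫ z in Dsq, ν z * f z with hA_def
  set B : ℝ := ∫ z in Dsq, μ z * f z with hB_def
  have hA0 : 0 ≤ A := setIntegral_nonneg hDm (fun z hz => mul_nonneg (hν0 z hz) (hf0 z hz))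
  have hB0 : 0 ≤ B := setIntegral_nonneg hDm (fun z hz => mul_nonneg (hμ0 z hz) (hf0 z hz))
  have hgsq : (∫ z in Dsq, g z ^ (2:ℝ)) = A := by
    rw [hA_def]
    apply setIntegral_congr_fun hDm
    intro z hz
    show g z ^ (2:ℝ) = ν z * f z
    rw [show (2:ℝ) = ((2:ℕ):ℝ) by norm_num, Real.rpow_natCast, hg_def]
    exact Real.sq_sqrt (mul_nonneg (hν0 z hz) (hf0 z hz))
  have hhsq : (∫ z in Dsq, h z ^ (2:ℝ)) = B := by
    rw [hB_def]
    apply setIntegral_congr_fun hDm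
    intro z hz
    show h z ^ (2:ℝ) = μ z * f z
    rw [show (2:ℝ) = ((2:ℕ):ℝ) by norm_num, Real.rpow_natCast, hh_def]
    exact Real.sq_sqrt (mul_nonneg (hμ0 z hz) (hf0 z hz))
  have hCS : (∫ z in Dsq, g z * h z) ≤ Real.sqrt A * Real.sqrt B := by
    calc (∫ z in Dsq, g z * h z)
        ≤ (∫ z in Dsq, g z ^ (2:ℝ)) ^ (1/(2:ℝ)) * (∫ z in Dsq, h z ^ (2:ℝ)) ^ (1/(2:ℝ)) := hHolder
      _ = Real.sqrt A * Real.sqrt B := by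
          rw [hgsq, hhsq, Real.sqrt_eq_rpow, Real.sqrt_eq_rpow]
  -- assemble
  have hbound : |∫ z in Dsq, μ z * dtf z| ≤ 2 * (Real.sqrt A * Real.sqrt B) := by
    rw [hIBP, abs_neg]
    calc |∫ z in Dsq, dtμ z * f z| ≤ ∫ z in Dsq, |dtμ z * f z| := by
          simpa [abs_mul] using MeasureTheory.norm_integral_le_integral_norm (μ := (volume : Measure (ℝ × ℝ)).restrict Dsq) (fun z => dtμ z * f z)
      _ = ∫ z in Dsq, |dtμ z| * |f z| := by
          simp only [abs_mul]
      _ ≤ ∫ z in Dsq, 2 * (g z * h z) := by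
          refine setIntegral_mono_on ?_ (hghint.const_mul 2) hDm ?_
          · simpa [abs_mul] using habsint
          · intro z hz; simpa [abs_mul] using hpw z hz
      _ = 2 * ∫ z in Dsq, g z * h z := by rw [MeasureTheory.integral_const_mul]
      _ ≤ 2 * (Real.sqrt A * Real.sqrt B) := by linarith [hCS]
  have hRHS0 : 0 ≤ 2 * (Real.sqrt A * Real.sqrt B) := by positivity
  calc (∫ z in Dsq, μ z * dtf z) ^ 2 = |∫ z in Dsq, μ z * dtf z| ^ 2 := (sq_abs _).symm
    _ ≤ (2 * (Real.sqrt A * Real.sqrt B)) ^ 2 := by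
        exact pow_le_pow_left₀ (abs_nonneg _) hbound 2
    _ = 4 * (Real.sqrt A ^ 2) * (Real.sqrt B ^ 2) := by ring
    _ = 4 * A * B := by rw [Real.sq_sqrt hA0, Real.sq_sqrt hB0]
end

section
/- Let g : [0,1] → L²([0,1]) be a continuously differentiable curve, and set μ(t) = g(t)² (the pointwise square of the function g(t) ∈ L²([0,1])), so μ(t) ∈ L¹([0,1]). Then for all s,t ∈ [0,1]: ‖μ(t) − μ(s)‖_{L¹([0,1])} ≤ 2 · (sup_{τ∈[0,1]} ‖g(τ)‖_{L²}) · |t−s|^{1/2} · (∫₀¹ ‖g'(τ)‖²_{L²} dτ)^{1/2}. In particular t ↦ μ(t) is Hölder continuous with exponent 1/2 as a map into L¹([0,1]). -/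
open Set MeasureTheory intervalIntegral

/-- Cauchy–Schwarz for L² elements: `∫ |f·h| ≤ ‖f‖‖h‖`. -/
lemma cs_L2 {α : Type*} [MeasurableSpace α] (μ : Measure α) (f h : Lp ℝ 2 μ) :
    (∫ x, |(f : α → ℝ) x * (h : α → ℝ) x| ∂μ) ≤ ‖f‖ * ‖h‖ := by
  have hpq : Real.HolderConjugate 2 2 := Real.holderConjugate_iff.mpr ⟨one_lt_two, by norm_num⟩
  have hf : MemLp (f : α → ℝ) (ENNReal.ofReal 2) μ := by
    rw [show ENNReal.ofReal 2 = 2 by norm_num]; exact Lp.memLp f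
  have hh : MemLp (h : α → ℝ) (ENNReal.ofReal 2) μ := by
    rw [show ENNReal.ofReal 2 = 2 by norm_num]; exact Lp.memLp h
  have key := integral_mul_norm_le_Lp_mul_Lq (μ := μ) hpq hf hh
  have e1 : (∫ x, |(f : α → ℝ) x * (h : α → ℝ) x| ∂μ)
      = ∫ x, ‖(f : α → ℝ) x‖ * ‖(h : α → ℝ) x‖ ∂μ := by
    simp [abs_mul, Real.norm_eq_abs]
  have nf : ‖f‖ = (∫ a, ‖(f : α → ℝ) a‖ ^ (2:ℝ) ∂μ) ^ (1/(2:ℝ)) := by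
    rw [Lp.norm_def, (Lp.memLp f).eLpNorm_eq_integral_rpow_norm two_ne_zero ENNReal.ofNat_ne_top,
      ENNReal.toReal_ofReal (by positivity)]
    norm_num
  have nh : ‖h‖ = (∫ a, ‖(h : α → ℝ) a‖ ^ (2:ℝ) ∂μ) ^ (1/(2:ℝ)) := by
    rw [Lp.norm_def, (Lp.memLp h).eLpNorm_eq_integral_rpow_norm two_ne_zero ENNReal.ofNat_ne_top,
      ENNReal.toReal_ofReal (by positivity)]
    norm_num
  rw [e1, nf, nh]
  exact key

/-- Cauchy–Schwarz for interval integrals of nonnegative functions. -/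
lemma cs_interval {φ : ℝ → ℝ} {s t : ℝ} (hst : s ≤ t) (hφ : ContinuousOn φ (Icc s t))
    (hφ0 : ∀ x, 0 ≤ φ x) :
    (∫ τ in s..t, φ τ) ≤ Real.sqrt (t - s) * Real.sqrt (∫ τ in s..t, φ τ ^ 2) := by
  set μ' : Measure ℝ := volume.restrict (Ioc s t) with hμ'
  haveI : IsFiniteMeasure μ' := by
    constructor
    rw [hμ', Measure.restrict_apply_univ, Real.volume_Ioc]
    exact ENNReal.ofReal_lt_top
  have hpq : Real.HolderConjugate 2 2 := Real.holderConjugate_iff.mpr ⟨one_lt_two, by norm_num⟩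
  obtain ⟨C, hC⟩ := (isCompact_Icc (a := s) (b := t)).exists_bound_of_continuousOn hφ
  have hmeas : AEStronglyMeasurable φ μ' :=
    (hφ.mono Ioc_subset_Icc_self).aestronglyMeasurable measurableSet_Ioc
  have hφm : MemLp φ (ENNReal.ofReal 2) μ' := by
    refine MemLp.of_bound hmeas C ?_
    filter_upwards [ae_restrict_mem measurableSet_Ioc] with x hx
    exact hC x (Ioc_subset_Icc_self hx)
  have h1 : MemLp (fun _ : ℝ => (1:ℝ)) (ENNReal.ofReal 2) μ' := memLp_const 1
  have key := integral_mul_norm_le_Lp_mul_Lq (μ := μ') hpq h1 hφm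
  have e0 : (∫ τ in s..t, φ τ) = ∫ a, ‖(1:ℝ)‖ * ‖φ a‖ ∂μ' := by
    rw [intervalIntegral.integral_of_le hst]
    refine integral_congr_ae (ae_of_all _ fun x => ?_)
    simp [Real.norm_eq_abs, abs_of_nonneg (hφ0 x)]
  have e1 : (∫ a : ℝ, ‖(1:ℝ)‖ ^ (2:ℝ) ∂μ') ^ (1/(2:ℝ)) = Real.sqrt (t - s) := by
    simp only [norm_one, Real.one_rpow, MeasureTheory.integral_const, smul_eq_mul, mul_one]
    rw [hμ', Measure.real, Measure.restrict_apply_univ, Real.volume_Ioc, ENNReal.toReal_ofReal (by linarith),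
      ← Real.sqrt_eq_rpow]
  have e2 : (∫ a, ‖φ a‖ ^ (2:ℝ) ∂μ') = ∫ τ in s..t, φ τ ^ 2 := by
    rw [intervalIntegral.integral_of_le hst]
    refine integral_congr_ae (ae_of_all _ fun x => ?_)
    show ‖φ x‖ ^ (2:ℝ) = φ x ^ 2
    rw [Real.norm_eq_abs, abs_of_nonneg (hφ0 x), show ((2:ℝ)) = ((2:ℕ):ℝ) from by norm_num,
      Real.rpow_natCast]
  rw [e0]
  calc ∫ a, ‖(1:ℝ)‖ * ‖φ a‖ ∂μ' ≤ _ := key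
    _ = _ := by rw [e1, e2, ← Real.sqrt_eq_rpow]

/-- for a `C¹` curve `g : [0,1] → L²([0,1])` and `μ(t) = g(t)²` (pointwise
square, an element of `L¹([0,1])`), one has for all `s, t ∈ [0,1]`:
`‖μ(t) − μ(s)‖_{L¹} ≤ 2 (sup_τ ‖g(τ)‖_{L²}) |t−s|^{1/2} (∫₀¹ ‖g'(τ)‖²_{L²} dτ)^{1/2}`;
in particular `t ↦ μ(t)` is `1/2`-Hölder into `L¹([0,1])`. -/
theorem stmt_15 (g g' : ℝ → MeasureTheory.Lp ℝ 2 mu01)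
    (hderiv : ∀ t ∈ Icc (0:ℝ) 1, HasDerivWithinAt g (g' t) (Icc (0:ℝ) 1) t)
    (hcont : ContinuousOn g' (Icc (0:ℝ) 1)) :
    ∀ s ∈ Icc (0:ℝ) 1, ∀ t ∈ Icc (0:ℝ) 1,
      (∫ x, |((g t : ℝ → ℝ) x) ^ 2 - ((g s : ℝ → ℝ) x) ^ 2| ∂mu01) ≤
        2 * sSup ((fun τ => ‖g τ‖) '' Icc (0:ℝ) 1) * Real.sqrt |t - s| *
          Real.sqrt (∫ τ in (0:ℝ)..1, ‖g' τ‖ ^ 2) := by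
  have hgc : ContinuousOn g (Icc (0:ℝ) 1) := fun τ hτ => (hderiv τ hτ).continuousWithinAt
  set M := sSup ((fun τ => ‖g τ‖) '' Icc (0:ℝ) 1) with hM
  set I := ∫ τ in (0:ℝ)..1, ‖g' τ‖ ^ 2 with hI
  have hbdd : BddAbove ((fun τ => ‖g τ‖) '' Icc (0:ℝ) 1) :=
    (isCompact_Icc.image_of_continuousOn (continuous_norm.comp_continuousOn hgc)).bddAbove
  have hMle : ∀ τ ∈ Icc (0:ℝ) 1, ‖g τ‖ ≤ M := fun τ hτ => le_csSup hbdd ⟨τ, hτ, rfl⟩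
  have hInn : 0 ≤ I := by
    rw [hI]
    exact intervalIntegral.integral_nonneg zero_le_one (fun x _ => by positivity)
  have key : ∀ s ∈ Icc (0:ℝ) 1, ∀ t ∈ Icc (0:ℝ) 1, s ≤ t →
      (∫ x, |((g t : ℝ → ℝ) x) ^ 2 - ((g s : ℝ → ℝ) x) ^ 2| ∂mu01) ≤
        2 * M * Real.sqrt |t - s| * Real.sqrt I := by
    intro s hs t ht hst
    have hsub : Icc s t ⊆ Icc (0:ℝ) 1 := Icc_subset_Icc hs.1 ht.2
    have hintg' : IntervalIntegrable g' volume s t := by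
      apply ContinuousOn.intervalIntegrable
      rw [uIcc_of_le hst]; exact hcont.mono hsub
    have hftc : (∫ τ in s..t, g' τ) = g t - g s := by
      apply integral_eq_sub_of_hasDeriv_right_of_le hst (hgc.mono hsub) ?_ hintg'
      intro x hx
      have hx01 : Icc (0:ℝ) 1 ∈ nhds x :=
        Icc_mem_nhds (lt_of_le_of_lt hs.1 hx.1) (lt_of_lt_of_le hx.2 ht.2)
      exact ((hderiv x (hsub (Ioo_subset_Icc_self hx))).hasDerivAt hx01).hasDerivWithinAt
    have h1 : ‖g t - g s‖ ≤ ∫ τ in s..t, ‖g' τ‖ := by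
      rw [← hftc]; exact intervalIntegral.norm_integral_le_integral_norm hst
    have h2 : (∫ τ in s..t, ‖g' τ‖) ≤ Real.sqrt (t - s) * Real.sqrt (∫ τ in s..t, ‖g' τ‖ ^ 2) :=
      cs_interval hst ((hcont.mono hsub).norm) (fun x => norm_nonneg _)
    have hmono : (∫ τ in s..t, ‖g' τ‖ ^ 2) ≤ I := by
      rw [hI]
      refine intervalIntegral.integral_mono_interval hs.1 hst ht.2
        (ae_of_all _ fun x => by positivity) ?_
      apply ContinuousOn.intervalIntegrable
      rw [uIcc_of_le zero_le_one]; exact hcont.norm.pow 2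
    have h3 : ‖g t - g s‖ ≤ Real.sqrt (t - s) * Real.sqrt I := by
      refine h1.trans (h2.trans ?_)
      exact mul_le_mul_of_nonneg_left (Real.sqrt_le_sqrt hmono) (Real.sqrt_nonneg _)
    have hna : ‖g t + g s‖ ≤ 2 * M := by
      have := norm_add_le (g t) (g s)
      have h1 := hMle t ht; have h2 := hMle s hs
      linarith
    have heq : (∫ x, |((g t : ℝ → ℝ) x) ^ 2 - ((g s : ℝ → ℝ) x) ^ 2| ∂mu01)
        = ∫ x, |((g t - g s : Lp ℝ 2 mu01) : ℝ → ℝ) x *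
            ((g t + g s : Lp ℝ 2 mu01) : ℝ → ℝ) x| ∂mu01 := by
      refine integral_congr_ae ?_
      filter_upwards [Lp.coeFn_sub (g t) (g s), Lp.coeFn_add (g t) (g s)] with x e1 e2
      rw [e1, e2, Pi.sub_apply, Pi.add_apply]
      congr 1; ring
    have hM0 : (0:ℝ) ≤ M := le_trans (norm_nonneg (g s)) (hMle s hs)
    calc (∫ x, |((g t : ℝ → ℝ) x) ^ 2 - ((g s : ℝ → ℝ) x) ^ 2| ∂mu01)
        = _ := heq
      _ ≤ ‖g t - g s‖ * ‖g t + g s‖ := cs_L2 mu01 _ _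
      _ ≤ (Real.sqrt (t - s) * Real.sqrt I) * (2 * M) := by
          refine mul_le_mul h3 hna (norm_nonneg _) (by positivity)
      _ = 2 * M * Real.sqrt |t - s| * Real.sqrt I := by
          rw [abs_of_nonneg (sub_nonneg.2 hst)]; ring
  intro s hs t ht
  rcases le_total s t with h | h
  · exact key s hs t ht h
  · calc (∫ x, |((g t : ℝ → ℝ) x) ^ 2 - ((g s : ℝ → ℝ) x) ^ 2| ∂mu01)
        = ∫ x, |((g s : ℝ → ℝ) x) ^ 2 - ((g t : ℝ → ℝ) x) ^ 2| ∂mu01 := by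
          refine integral_congr_ae (ae_of_all _ fun x => ?_)
          exact abs_sub_comm _ _
      _ ≤ 2 * M * Real.sqrt |s - t| * Real.sqrt I := key t ht s hs h
      _ = 2 * M * Real.sqrt |t - s| * Real.sqrt I := by rw [abs_sub_comm]
end
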